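/- arXiv:1410.8628 — 3 statements merged into one kernel-verified Lean document; each statement's English description precedes it below -/
import Mathlib

section
/- In the group algebra ℚ[G_{r,n}], define C_i = Σ_{π ∈ G_{r,n}, des(π) = i} π for i = 0, 1, …, n. Then for all i, k ∈ {0, …, n}, the product C_i·C_k lies in the ℚ-linear span of {C_0, C_1, …, C_n}. (In other words, the formal sums of colored permutations with a fixed number of descents span a subalgebra, the colored Eulerian descent algebra.) -/
open scoped BigOperators

/-- Lexicographic (color-first) strict order on colored letters `(value, color)`. -/
def letterLT (x y : ℕ × ℕ) : Prop :=
  x.2 < y.2 ∨ (x.2 = y.2 ∧ x.1 < y.1)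

instance : DecidableRel letterLT := fun x y => by
  unfold letterLT; infer_instance

/-- The colored permutation group `G_{r,n}`. -/
@[ext] structure ColoredPerm (r n : ℕ) where
  perm : Equiv.Perm (Fin n)
  col : Fin n → ZMod r

namespace ColoredPerm

variable {r n : ℕ}

instance : Mul (ColoredPerm r n) :=
  ⟨fun a b => ⟨a.perm * b.perm, fun i => a.col (b.perm i) + b.col i⟩⟩

instance : One (ColoredPerm r n) :=
  ⟨⟨1, fun _ => 0⟩⟩

instance : Inv (ColoredPerm r n) :=
  ⟨fun a => ⟨a.perm⁻¹, fun i => -a.col (a.perm⁻¹ i)⟩⟩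

instance : Group (ColoredPerm r n) where
  mul_assoc a b c := by
    refine ColoredPerm.ext (mul_assoc _ _ _) ?_
    funext i
    show a.col (b.perm (c.perm i)) + b.col (c.perm i) + c.col i
        = a.col ((b.perm * c.perm) i) + (b.col (c.perm i) + c.col i)
    rw [Equiv.Perm.mul_apply, add_assoc]
  one_mul a := by
    refine ColoredPerm.ext (one_mul _) ?_
    funext i
    show (0 : ZMod r) + a.col i = a.col i
    rw [zero_add]
  mul_one a := by
    refine ColoredPerm.ext (mul_one _) ?_
    funext i
    show a.col ((1 : Equiv.Perm (Fin n)) i) + 0 = a.col i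
    simp
  inv_mul_cancel a := by
    refine ColoredPerm.ext (inv_mul_cancel _) ?_
    funext i
    show -a.col (a.perm⁻¹ (a.perm i)) + a.col i = 0
    simp

/-- `ColoredPerm r n` is equivalent (as a type) to a product. -/
def toProd : ColoredPerm r n ≃ Equiv.Perm (Fin n) × (Fin n → ZMod r) where
  toFun a := (a.perm, a.col)
  invFun p := ⟨p.1, p.2⟩
  left_inv _ := rfl
  right_inv _ := rfl

instance [NeZero r] : Fintype (ColoredPerm r n) := Fintype.ofEquiv _ toProd.symm

instance : DecidableEq (ColoredPerm r n) := toProd.decidableEq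

/-- The `i`-th letter of the one-line notation (0-indexed), as a pair (value, color);
for `i = n` this is the sentinel letter `0₁`. Values are in `{1, …, n}`. -/
def letterAt (a : ColoredPerm r n) (i : ℕ) : ℕ × ℕ :=
  if h : i < n then ((a.perm ⟨i, h⟩ : ℕ) + 1, (a.col ⟨i, h⟩).val) else (0, 1)

/-- The descent set of a colored permutation (positions 0-indexed: position `i`
corresponds to the paper's `i+1 ∈ {1, …, n}`). -/
def Des (a : ColoredPerm r n) : Finset (Fin n) :=
  Finset.univ.filter fun i : Fin n => letterLT (letterAt a (i.1 + 1)) (letterAt a i.1)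

/-- The descent number. -/
def des (a : ColoredPerm r n) : ℕ := (Des a).card

/-- The internal descent number `|Des(π) ∩ {1, …, n−1}|`. -/
def intdes (a : ColoredPerm r n) : ℕ :=
  ((Des a).filter fun i : Fin n => i.1 + 1 < n).card

end ColoredPerm

open ColoredPerm

/-- `C_i`: the formal sum, in the group algebra `ℚ[G_{r,n}]`, of all colored
permutations with exactly `i` descents. -/
noncomputable def eulerianBasis (r n : ℕ) [NeZero r] (i : ℕ) :
    MonoidAlgebra ℚ (ColoredPerm r n) :=
  ∑ π ∈ Finset.univ.filter (fun π : ColoredPerm r n => des π = i),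
    MonoidAlgebra.of ℚ (ColoredPerm r n) π

section EulerAux

open Finset

variable {r n : ℕ} [NeZero r]

/-- Standardization of a word: argsort plus colors given by values mod `r`. -/
def wstd {N : ℕ} (f : Fin n → Fin N) : ColoredPerm r n :=
  ⟨Tuple.sort f, fun i => (((f (Tuple.sort f i)) : ℕ) : ZMod r)⟩

lemma sort_mono {N : ℕ} (f : Fin n → Fin N) : Monotone (f ∘ Tuple.sort f) :=
  Tuple.monotone_sort f

lemma sort_tie {N : ℕ} (f : Fin n → Fin N) {i j : Fin n} (h : i < j)
    (he : f (Tuple.sort f i) = f (Tuple.sort f j)) :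
    Tuple.sort f i < Tuple.sort f j :=
  ((Tuple.eq_sort_iff.mp rfl).2) i j h he

lemma enc_lt_of_lt {R u v e e' : ℕ} (he : e < R) (h : u < v) :
    R * u + e < R * v + e' := by
  have h1 : R * (u + 1) ≤ R * v := Nat.mul_le_mul_left R h
  rw [Nat.mul_succ] at h1
  calc R * u + e < R * u + R := Nat.add_lt_add_left he _
    _ ≤ R * v := h1
    _ ≤ R * v + e' := Nat.le_add_right _ _

lemma enc_le_iff {R u v e e' : ℕ} (he : e < R) (he' : e' < R) :
    R * u + e ≤ R * v + e' ↔ (u < v ∨ (u = v ∧ e ≤ e')) := by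
  constructor
  · intro h
    rcases Nat.lt_trichotomy u v with h1 | h1 | h1
    · exact Or.inl h1
    · subst h1
      exact Or.inr ⟨rfl, Nat.le_of_add_le_add_left h⟩
    · exact absurd h (Nat.not_le_of_lt (enc_lt_of_lt he' h1))
  · rintro (h1 | ⟨rfl, h2⟩)
    · exact (enc_lt_of_lt he h1).le
    · exact Nat.add_le_add_left h2 _

lemma enc_eq_iff {R u v e e' : ℕ} (he : e < R) (he' : e' < R) :
    R * u + e = R * v + e' ↔ (u = v ∧ e = e') := by
  constructor
  · intro h
    have h1 := (enc_le_iff he he').mp h.le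
    have h2 := (enc_le_iff he' he).mp h.ge
    omega
  · rintro ⟨rfl, rfl⟩; rfl

lemma mono_helper {n : ℕ} (v : ℕ → ℕ) (h : ∀ k, k + 1 < n → v k ≤ v (k + 1)) :
    ∀ j, j < n → ∀ i, i ≤ j → v i ≤ v j := by
  intro j
  induction j with
  | zero => intro _ i hi; simp [Nat.le_zero.mp hi]
  | succ t ih =>
    intro hj i hi
    rcases Nat.lt_or_ge i (t + 1) with h1 | h1
    · exact le_trans (ih (by omega) i (by omega)) (h t hj)
    · have : i = t + 1 := by omega
      subst this; exact le_rfl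

lemma chain_helper {n : ℕ} (v s : ℕ → ℕ) (hmono : ∀ k, k + 1 < n → v k ≤ v (k + 1))
    (htie : ∀ k, k + 1 < n → v k = v (k + 1) → s k < s (k + 1)) :
    ∀ j, j < n → ∀ i, i < j → v i = v j → s i < s j := by
  intro j
  induction j with
  | zero => omega
  | succ t ih =>
    intro hj i hij heq
    rcases Nat.lt_or_ge i t with h1 | h1
    · have hvt : v i ≤ v t := mono_helper v hmono t (by omega) i (by omega)
      have hvt' : v t ≤ v (t + 1) := hmono t hj
      have h2 : v i = v t := by omega
      have h3 : v t = v (t + 1) := by omega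
      exact lt_trans (ih (by omega) i h1 h2) (htie t hj h3)
    · have h4 : i = t := by omega
      subst h4
      exact htie _ hj heq

/-- Combination of two words; `std` of the result is the product of the `std`s. -/
def combine {N M : ℕ} (f : Fin n → Fin N) (g : Fin n → Fin M) : Fin n → Fin (N * M) :=
  fun i => ⟨N * (g ((Tuple.sort f)⁻¹ i) : ℕ) + (f i : ℕ), by
    calc N * (g ((Tuple.sort f)⁻¹ i) : ℕ) + (f i : ℕ)
        < N * (g ((Tuple.sort f)⁻¹ i) : ℕ) + N := Nat.add_lt_add_left (f i).isLt _
      _ = N * ((g ((Tuple.sort f)⁻¹ i) : ℕ) + 1) := by ring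
      _ ≤ N * M := Nat.mul_le_mul_left N (Nat.succ_le_of_lt (g _).isLt)⟩

lemma combine_val {N M : ℕ} (f : Fin n → Fin N) (g : Fin n → Fin M) (k : Fin n) :
    (combine f g (Tuple.sort f (Tuple.sort g k)) : ℕ)
      = N * (g (Tuple.sort g k) : ℕ) + (f (Tuple.sort f (Tuple.sort g k)) : ℕ) := by
  simp [combine]

lemma combine_sort {N M : ℕ} (f : Fin n → Fin N) (g : Fin n → Fin M) :
    Tuple.sort (combine f g) = Tuple.sort f * Tuple.sort g := by
  set σ := Tuple.sort f
  set τ := Tuple.sort g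
  have key : ∀ k : Fin n, (combine f g ((σ * τ) k) : ℕ)
      = N * (g (τ k) : ℕ) + (f (σ (τ k)) : ℕ) := by
    intro k
    have : (σ * τ) k = σ (τ k) := rfl
    rw [this]
    exact combine_val f g k
  symm
  apply (Tuple.eq_sort_iff).mpr
  constructor
  · -- monotone
    intro i j hij
    simp only [Function.comp_apply]
    rw [← Fin.val_fin_le, key i, key j]
    have hg : (g (τ i) : ℕ) ≤ (g (τ j) : ℕ) := sort_mono g hij
    rcases hg.lt_or_eq with hlt | heqg
    · exact (enc_lt_of_lt (f _).isLt hlt).le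
    · rcases hij.lt_or_eq with hlt | rfl
      · have hττ : τ i < τ j := sort_tie g hlt (Fin.val_injective heqg)
        have hf : (f (σ (τ i)) : ℕ) ≤ (f (σ (τ j)) : ℕ) := sort_mono f hττ.le
        rw [heqg]
        exact Nat.add_le_add_left hf _
      · exact le_rfl
  · -- tie-break
    intro i j hij heq
    have heqv : (combine f g ((σ * τ) i) : ℕ) = (combine f g ((σ * τ) j) : ℕ) := by
      rw [heq]
    rw [key i, key j] at heqv
    obtain ⟨hg, hf⟩ := (enc_eq_iff (f _).isLt (f _).isLt).mp heqv
    have hττ : τ i < τ j := sort_tie g hij (Fin.val_injective hg)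
    have : σ (τ i) < σ (τ j) := sort_tie f hττ (Fin.val_injective hf)
    exact this

lemma wstd_combine {N M : ℕ} (hN : (N : ZMod r) = 1)
    (f : Fin n → Fin N) (g : Fin n → Fin M) :
    wstd (r := r) (combine f g) = wstd f * wstd g := by
  set σ := Tuple.sort f
  set τ := Tuple.sort g
  refine ColoredPerm.ext ?_ ?_
  · show Tuple.sort (combine f g) = (wstd (r := r) f).perm * (wstd (r := r) g).perm
    exact combine_sort f g
  · funext i
    show (((combine f g (Tuple.sort (combine f g) i)) : ℕ) : ZMod r)
        = (wstd (r := r) f).col ((wstd (r := r) g).perm i) + (wstd (r := r) g).col i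
    rw [combine_sort f g]
    have : (σ * τ) i = σ (τ i) := rfl
    rw [this]
    have hv := combine_val f g i
    rw [hv]
    show (((N * (g (τ i) : ℕ) + (f (σ (τ i)) : ℕ) : ℕ)) : ZMod r)
        = (((f (σ (τ i)) : ℕ)) : ZMod r) + (((g (τ i) : ℕ)) : ZMod r)
    push_cast
    rw [hN]
    ring

noncomputable def Xel (r n : ℕ) [NeZero r] (N : ℕ) : MonoidAlgebra ℚ (ColoredPerm r n) :=
  ∑ f : Fin n → Fin N, MonoidAlgebra.of ℚ (ColoredPerm r n) (wstd f)

lemma perm_inv_apply_self {α : Type*} (σ : Equiv.Perm α) (x : α) : σ⁻¹ (σ x) = x :=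
  σ.symm_apply_apply x

lemma perm_apply_inv_self {α : Type*} (σ : Equiv.Perm α) (x : α) : σ (σ⁻¹ x) = x :=
  σ.apply_symm_apply x

def decf {N M : ℕ} (hN0 : 0 < N) (h : Fin n → Fin (N * M)) : Fin n → Fin N :=
  fun i => ⟨(h i : ℕ) % N, Nat.mod_lt _ hN0⟩

def decg {N M : ℕ} (hN0 : 0 < N) (h : Fin n → Fin (N * M)) : Fin n → Fin M :=
  fun j => ⟨(h (Tuple.sort (decf hN0 h) j) : ℕ) / N,
    Nat.div_lt_of_lt_mul (h _).isLt⟩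

lemma Xel_mul {N M : ℕ} (hN0 : 0 < N) (hN : (N : ZMod r) = 1) :
    Xel r n N * Xel r n M = Xel r n (N * M) := by
  rw [Xel, Xel, Xel, Finset.sum_mul_sum, ← Finset.sum_product']
  refine Finset.sum_nbij' (fun x => combine x.1 x.2)
    (fun h => (decf hN0 h, decg hN0 h)) (fun _ _ => Finset.mem_univ _)
    (fun _ _ => Finset.mem_univ _) ?_ ?_ ?_
  · -- left inverse
    rintro ⟨f, g⟩ -
    have hdecf : decf (M := M) hN0 (combine f g) = f := by
      funext i
      apply Fin.ext
      show ((combine f g i : ℕ)) % N = (f i : ℕ)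
      show (N * (g ((Tuple.sort f)⁻¹ i) : ℕ) + (f i : ℕ)) % N = (f i : ℕ)
      rw [Nat.mul_add_mod]
      exact Nat.mod_eq_of_lt (f i).isLt
    have hdecg : decg (M := M) hN0 (combine f g) = g := by
      funext j
      apply Fin.ext
      show ((combine f g (Tuple.sort (decf hN0 (combine f g)) j) : ℕ)) / N = (g j : ℕ)
      rw [hdecf]
      show (N * (g ((Tuple.sort f)⁻¹ (Tuple.sort f j)) : ℕ)
          + (f (Tuple.sort f j) : ℕ)) / N = (g j : ℕ)
      rw [perm_inv_apply_self]
      rw [Nat.mul_add_div hN0]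
      rw [Nat.div_eq_of_lt (f _).isLt]
      omega
    show (decf hN0 (combine f g), decg hN0 (combine f g)) = (f, g)
    rw [hdecf, hdecg]
  · -- right inverse
    rintro h -
    show combine (decf hN0 h) (decg hN0 h) = h
    funext k
    apply Fin.ext
    show N * ((decg hN0 h) ((Tuple.sort (decf hN0 h))⁻¹ k) : ℕ) + ((decf hN0 h) k : ℕ)
        = (h k : ℕ)
    show N * ((h (Tuple.sort (decf hN0 h) ((Tuple.sort (decf hN0 h))⁻¹ k)) : ℕ) / N)
        + (h k : ℕ) % N = (h k : ℕ)
    rw [perm_apply_inv_self]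
    exact Nat.div_add_mod _ _
  · -- summand equality
    rintro ⟨f, g⟩ -
    show MonoidAlgebra.of ℚ (ColoredPerm r n) (wstd f)
        * MonoidAlgebra.of ℚ (ColoredPerm r n) (wstd g) = _
    rw [← map_mul, ← wstd_combine hN]

end EulerAux


section Fiber

variable {r n : ℕ} [NeZero r]

lemma fin_mono_of_adjacent {n : ℕ} (v : Fin n → ℕ)
    (h : ∀ (k : ℕ) (hk1 : k < n) (hk2 : k + 1 < n), v ⟨k, hk1⟩ ≤ v ⟨k + 1, hk2⟩) :
    ∀ a b : Fin n, a ≤ b → v a ≤ v b := by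
  have H : ∀ (j : ℕ) (hj : j < n) (i : ℕ) (hi : i < n), i ≤ j → v ⟨i, hi⟩ ≤ v ⟨j, hj⟩ := by
    intro j
    induction j with
    | zero =>
      intro hj i hi hij
      have : i = 0 := by omega
      subst this; exact le_rfl
    | succ t ih =>
      intro hj i hi hij
      rcases Nat.lt_or_ge i (t + 1) with h1 | h1
      · exact le_trans (ih (by omega) i hi (by omega)) (h t (by omega) hj)
      · have : i = t + 1 := by omega
        subst this; exact le_rfl
  intro a b hab
  have := H b.1 b.2 a.1 a.2 hab
  simpa using this

lemma fin_chain_of_adjacent {n : ℕ} (v s : Fin n → ℕ)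
    (hmono : ∀ (k : ℕ) (hk1 : k < n) (hk2 : k + 1 < n), v ⟨k, hk1⟩ ≤ v ⟨k + 1, hk2⟩)
    (htie : ∀ (k : ℕ) (hk1 : k < n) (hk2 : k + 1 < n),
      v ⟨k, hk1⟩ = v ⟨k + 1, hk2⟩ → s ⟨k, hk1⟩ < s ⟨k + 1, hk2⟩) :
    ∀ a b : Fin n, a < b → v a = v b → s a < s b := by
  have H : ∀ (j : ℕ) (hj : j < n) (i : ℕ) (hi : i < n), i < j →
      v ⟨i, hi⟩ = v ⟨j, hj⟩ → s ⟨i, hi⟩ < s ⟨j, hj⟩ := by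
    intro j
    induction j with
    | zero => omega
    | succ t ih =>
      intro hj i hi hij heq
      rcases Nat.lt_or_ge i t with h1 | h1
      · have ht : t < n := by omega
        have hvt : v ⟨i, hi⟩ ≤ v ⟨t, ht⟩ := by
          have := fin_mono_of_adjacent v hmono ⟨i, hi⟩ ⟨t, ht⟩ (by simp [Fin.le_def]; omega)
          exact this
        have hvt' : v ⟨t, ht⟩ ≤ v ⟨t + 1, hj⟩ := hmono t ht hj
        have h2 : v ⟨i, hi⟩ = v ⟨t, ht⟩ := by omega
        have h3 : v ⟨t, ht⟩ = v ⟨t + 1, hj⟩ := by omega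
        exact lt_trans (ih ht i hi h1 h2) (htie t ht hj h3)
      · have : i = t := by omega
        subst this
        exact htie i hi hj heq
  intro a b hab heq
  have := H b.1 b.2 a.1 a.2 hab (by simpa using heq)
  simpa using this

/-- Number of descents strictly below `i`. -/
def DB (π : ColoredPerm r n) (i : Fin n) : ℕ := ((Des π).filter (fun j => j < i)).card

/-- Number of descents at or above `i`. -/
def DFr (π : ColoredPerm r n) (i : Fin n) : ℕ := ((Des π).filter (fun j => i ≤ j)).card

lemma DB_add_DFr (π : ColoredPerm r n) (i : Fin n) : DB π i + DFr π i = des π := by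
  rw [DB, DFr, des]
  have e : (Des π).filter (fun a => ¬ a < i) = (Des π).filter (fun j => i ≤ j) := by
    apply Finset.filter_congr
    intro j _
    simp [not_lt]
  rw [← Finset.card_filter_add_card_filter_not (s := Des π) (p := fun j => j < i), e]

lemma DB_zero (π : ColoredPerm r n) (i : Fin n) (h : (i : ℕ) = 0) : DB π i = 0 := by
  rw [DB, Finset.card_eq_zero, Finset.filter_eq_empty_iff]
  intro j _
  rw [Fin.lt_def]
  omega

lemma DB_succ (π : ColoredPerm r n) (i i' : Fin n) (h : (i' : ℕ) = (i : ℕ) + 1) :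
    DB π i' = DB π i + (if i ∈ Des π then 1 else 0) := by
  rw [DB, DB]
  have e : (Des π).filter (fun j => j < i') =
      (Des π).filter (fun j => j < i ∨ j = i) := by
    apply Finset.filter_congr
    intro j _
    simp only [Fin.lt_def, Fin.ext_iff, eq_iff_iff]
    omega
  rw [e, Finset.filter_or, Finset.card_union_of_disjoint, Finset.filter_eq']
  · rw [apply_ite Finset.card]
    simp
  · rw [Finset.disjoint_left]
    intro a ha hb
    simp only [Finset.mem_filter] at ha hb
    have h1 := ha.2
    have h2 := hb.2
    subst h2
    exact absurd h1 (lt_irrefl _)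

lemma DFr_succ (π : ColoredPerm r n) (i i' : Fin n) (h : (i' : ℕ) = (i : ℕ) + 1) :
    DFr π i = DFr π i' + (if i ∈ Des π then 1 else 0) := by
  rw [DFr, DFr]
  have e : (Des π).filter (fun j => i ≤ j) =
      (Des π).filter (fun j => i' ≤ j ∨ j = i) := by
    apply Finset.filter_congr
    intro j _
    simp only [Fin.le_def, Fin.ext_iff, eq_iff_iff]
    omega
  rw [e, Finset.filter_or, Finset.card_union_of_disjoint, Finset.filter_eq']
  · rw [apply_ite Finset.card]
    simp
  · rw [Finset.disjoint_left]
    intro a ha hb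
    simp only [Finset.mem_filter, Fin.le_def] at ha hb
    have h1 := ha.2
    have h2 := hb.2
    subst h2
    omega

lemma DFr_last (π : ColoredPerm r n) (i : Fin n) (h : (i : ℕ) + 1 = n) :
    DFr π i = (if i ∈ Des π then 1 else 0) := by
  rw [DFr]
  have e : (Des π).filter (fun j => i ≤ j) = (Des π).filter (fun j => j = i) := by
    apply Finset.filter_congr
    intro j _
    simp only [Fin.le_def, Fin.ext_iff, eq_iff_iff]
    have := j.isLt
    omega
  rw [e, Finset.filter_eq', apply_ite Finset.card]
  simp

lemma mem_Des_internal (π : ColoredPerm r n) (i i' : Fin n) (h : (i' : ℕ) = (i : ℕ) + 1) :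
    (i ∈ Des π ↔ ((π.col i').val < (π.col i).val ∨
      ((π.col i').val = (π.col i).val ∧ (π.perm i' : ℕ) < (π.perm i : ℕ)))) := by
  have h1 : (i : ℕ) + 1 < n := by have := i'.isLt; omega
  have e1 : (⟨(i : ℕ) + 1, h1⟩ : Fin n) = i' := Fin.ext (by simp [h])
  rw [Des, Finset.mem_filter]
  simp only [letterAt, letterLT, dif_pos h1, dif_pos i.isLt, e1, Fin.eta,
    Finset.mem_univ, true_and]
  omega

lemma mem_Des_last (π : ColoredPerm r n) (i : Fin n) (h : (i : ℕ) + 1 = n) :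
    (i ∈ Des π ↔ (π.col i).val ≠ 0) := by
  rw [Des, Finset.mem_filter]
  simp only [letterAt, letterLT, dif_neg (show ¬ ((i : ℕ) + 1 < n) by omega),
    dif_pos i.isLt, Fin.eta, Finset.mem_univ, true_and]
  omega

lemma des_le (π : ColoredPerm r n) : des π ≤ n := by
  rw [des, Des]
  exact le_trans (Finset.card_filter_le _ _) (by simp)

lemma colzero (π : ColoredPerm r n) :
    ∀ i : Fin n, DFr π i = 0 → (π.col i).val = 0 := by
  suffices H : ∀ (d k : ℕ) (hk : k < n), n - 1 - k = d → DFr π ⟨k, hk⟩ = 0 →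
      (π.col ⟨k, hk⟩).val = 0 by
    rintro ⟨k, hk⟩ h0
    exact H _ k hk rfl h0
  intro d
  induction d with
  | zero =>
    intro k hk hd hDF
    have hlast : k + 1 = n := by omega
    have hDFl := DFr_last π ⟨k, hk⟩ hlast
    have hnot : (⟨k, hk⟩ : Fin n) ∉ Des π := by
      intro hmem
      rw [if_pos hmem] at hDFl
      omega
    by_contra hne
    exact hnot ((mem_Des_last π ⟨k, hk⟩ hlast).mpr hne)
  | succ d ih =>
    intro k hk hd hDF
    have hk1 : k + 1 < n := by omega
    have hsucc := DFr_succ π ⟨k, hk⟩ ⟨k + 1, hk1⟩ rfl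
    have hnot : (⟨k, hk⟩ : Fin n) ∉ Des π := by
      intro hmem
      rw [if_pos hmem] at hsucc
      omega
    rw [if_neg hnot] at hsucc
    have hnext : (π.col ⟨k + 1, hk1⟩).val = 0 := ih (k + 1) hk1 (by omega) (by omega)
    have hchar := mem_Des_internal π ⟨k, hk⟩ ⟨k + 1, hk1⟩ rfl
    have hnc : ¬ ((π.col ⟨k + 1, hk1⟩).val < (π.col ⟨k, hk⟩).val ∨
        ((π.col ⟨k + 1, hk1⟩).val = (π.col ⟨k, hk⟩).val ∧
          (π.perm ⟨k + 1, hk1⟩ : ℕ) < (π.perm ⟨k, hk⟩ : ℕ))) :=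
      fun hx => hnot (hchar.mpr hx)
    omega

lemma bwd_bound (π : ColoredPerm r n) (p : ℕ) (w : Fin n → Fin (p + 1 - des π)) (i : Fin n) :
    r * ((w i : ℕ) + DB π i) + (π.col i).val < r * p + 1 := by
  have hE : (π.col i).val < r := ZMod.val_lt _
  have hw : (w i : ℕ) < p + 1 - des π := (w i).isLt
  have hsum := DB_add_DFr π i
  rcases Nat.eq_zero_or_pos (DFr π i) with h0 | h1
  · have hcol : (π.col i).val = 0 := colzero π i h0
    have h2 : (w i : ℕ) + DB π i ≤ p := by omega
    have h3 : r * ((w i : ℕ) + DB π i) ≤ r * p := Nat.mul_le_mul_left r h2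
    omega
  · have h2 : (w i : ℕ) + DB π i ≤ p - 1 := by omega
    have h3 : r * ((w i : ℕ) + DB π i) ≤ r * (p - 1) := Nat.mul_le_mul_left r h2
    have h4 : r * (p - 1) + r = r * p := by
      have h5 : (p - 1) + 1 = p := by omega
      calc r * (p - 1) + r = r * ((p - 1) + 1) := (Nat.mul_succ r (p - 1)).symm
        _ = r * p := by rw [h5]
    omega

/-- The inverse map of the fiber bijection. -/
def bwdF (π : ColoredPerm r n) (p : ℕ) (w : Fin n → Fin (p + 1 - des π)) :
    Fin n → Fin (r * p + 1) :=
  fun j => ⟨r * ((w (π.perm⁻¹ j) : ℕ) + DB π (π.perm⁻¹ j)) + (π.col (π.perm⁻¹ j)).val,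
    bwd_bound π p w _⟩

lemma bwdF_perm_apply (π : ColoredPerm r n) (p : ℕ) (w : Fin n → Fin (p + 1 - des π))
    (i : Fin n) :
    (bwdF π p w (π.perm i) : ℕ) = r * ((w i : ℕ) + DB π i) + (π.col i).val := by
  simp [bwdF, perm_inv_apply_self]

lemma bwd_mem (π : ColoredPerm r n) (p : ℕ) (w : Fin n → Fin (p + 1 - des π))
    (hw : ∀ a b : Fin n, a ≤ b → w a ≤ w b) :
    wstd (bwdF π p w) = π := by
  have hE : ∀ i : Fin n, (π.col i).val < r := fun i => ZMod.val_lt _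
  set F := bwdF π p w with hF
  have hFval : ∀ i, (F (π.perm i) : ℕ) = r * ((w i : ℕ) + DB π i) + (π.col i).val :=
    bwdF_perm_apply π p w
  have hadj : ∀ (k : ℕ) (hk1 : k < n) (hk2 : k + 1 < n),
      ((F (π.perm ⟨k, hk1⟩) : ℕ) ≤ (F (π.perm ⟨k + 1, hk2⟩) : ℕ)) ∧
      ((F (π.perm ⟨k, hk1⟩) : ℕ) = (F (π.perm ⟨k + 1, hk2⟩) : ℕ) →
        (π.perm ⟨k, hk1⟩ : ℕ) < (π.perm ⟨k + 1, hk2⟩ : ℕ)) := by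
    intro k hk1 hk2
    set i : Fin n := ⟨k, hk1⟩
    set i' : Fin n := ⟨k + 1, hk2⟩
    have hDB := DB_succ π i i' rfl
    have hwle : (w i : ℕ) ≤ (w i' : ℕ) := hw i i' (by simp [Fin.le_def, i, i'])
    rw [hFval i, hFval i']
    by_cases hdes : i ∈ Des π
    · rw [if_pos hdes] at hDB
      have hu : (w i : ℕ) + DB π i < (w i' : ℕ) + DB π i' := by omega
      refine ⟨(enc_lt_of_lt (hE i) hu).le, ?_⟩
      intro hEq
      obtain ⟨h1, h2⟩ := (enc_eq_iff (hE i) (hE i')).mp hEq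
      omega
    · rw [if_neg hdes] at hDB
      have hchar := mem_Des_internal π i i' rfl
      have hnot : ¬ ((π.col i').val < (π.col i).val ∨
          ((π.col i').val = (π.col i).val ∧ (π.perm i' : ℕ) < (π.perm i : ℕ))) :=
        fun hx => hdes (hchar.mpr hx)
      constructor
      · rcases Nat.lt_or_ge (w i : ℕ) (w i' : ℕ) with hlt | hge
        · exact (enc_lt_of_lt (hE i) (by omega)).le
        · have heqw : (w i : ℕ) = (w i' : ℕ) := by omega
          have hEle : (π.col i).val ≤ (π.col i').val := by omega
          have he2 : (w i : ℕ) + DB π i = (w i' : ℕ) + DB π i' := by omega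
          rw [he2]
          exact Nat.add_le_add_left hEle _
      · intro hEq
        obtain ⟨h1, h2⟩ := (enc_eq_iff (hE i) (hE i')).mp hEq
        have hne : (π.perm i : ℕ) ≠ (π.perm i' : ℕ) := by
          intro hc
          have hperm : π.perm i = π.perm i' := Fin.ext hc
          have := π.perm.injective hperm
          rw [Fin.ext_iff] at this
          simp [i, i'] at this
        omega
  have hsort : Tuple.sort F = π.perm := by
    symm
    apply Tuple.eq_sort_iff.mpr
    constructor
    · intro a b hab
      have := fin_mono_of_adjacent (fun i => (F (π.perm i) : ℕ))
        (fun k hk1 hk2 => (hadj k hk1 hk2).1) a b hab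
      exact this
    · intro a b hab heqF
      have hchain := fin_chain_of_adjacent (fun i => (F (π.perm i) : ℕ))
        (fun i => (π.perm i : ℕ))
        (fun k hk1 hk2 => (hadj k hk1 hk2).1)
        (fun k hk1 hk2 => (hadj k hk1 hk2).2) a b hab
        (congrArg Fin.val heqF)
      exact hchain
  refine ColoredPerm.ext hsort ?_
  funext i
  show (((F (Tuple.sort F i)) : ℕ) : ZMod r) = π.col i
  rw [hsort, hFval i]
  push_cast
  rw [ZMod.natCast_self]
  simp only [zero_mul, zero_add]
  exact ZMod.natCast_rightInverse (π.col i)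

lemma fwd_facts (π : ColoredPerm r n) (p : ℕ) (f : Fin n → Fin (r * p + 1))
    (hf : wstd f = π) :
    (∀ i : Fin n, (π.col i).val = (f (π.perm i) : ℕ) % r) ∧
    (∀ (k : ℕ) (hk1 : k < n) (hk2 : k + 1 < n),
      ((f (π.perm ⟨k, hk1⟩) : ℕ) / r ≤ (f (π.perm ⟨k + 1, hk2⟩) : ℕ) / r) ∧
      ((⟨k, hk1⟩ : Fin n) ∈ Des π →
        (f (π.perm ⟨k, hk1⟩) : ℕ) / r < (f (π.perm ⟨k + 1, hk2⟩) : ℕ) / r)) := by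
  have hr : 0 < r := Nat.pos_of_ne_zero (NeZero.ne r)
  have hE : ∀ i : Fin n, (π.col i).val < r := fun i => ZMod.val_lt _
  have hsort : Tuple.sort f = π.perm := congrArg ColoredPerm.perm hf
  have hcol : ∀ i : Fin n, (π.col i).val = (f (π.perm i) : ℕ) % r := by
    intro i
    have h1 : (wstd (r := r) f).col i = π.col i := by rw [hf]
    have h2 : (wstd (r := r) f).col i = (((f (Tuple.sort f i)) : ℕ) : ZMod r) := rfl
    rw [h2, hsort] at h1
    rw [← h1, ZMod.val_natCast]
  have hmono : ∀ a b : Fin n, a ≤ b → (f (π.perm a) : ℕ) ≤ (f (π.perm b) : ℕ) := by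
    intro a b hab
    have := sort_mono f hab
    rw [Function.comp_apply, Function.comp_apply, hsort] at this
    exact this
  have htie : ∀ a b : Fin n, a < b → (f (π.perm a) : ℕ) = (f (π.perm b) : ℕ) →
      (π.perm a : ℕ) < (π.perm b : ℕ) := by
    intro a b hab heq
    have h1 : f (Tuple.sort f a) = f (Tuple.sort f b) := by
      rw [hsort]; exact Fin.ext heq
    have := sort_tie f hab h1
    rw [hsort] at this
    exact this
  refine ⟨hcol, ?_⟩
  intro k hk1 hk2
  set i : Fin n := ⟨k, hk1⟩
  set i' : Fin n := ⟨k + 1, hk2⟩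
  have hle : (f (π.perm i) : ℕ) ≤ (f (π.perm i') : ℕ) := hmono i i' (by simp [Fin.le_def, i, i'])
  have hdec : (f (π.perm i) : ℕ) = r * ((f (π.perm i) : ℕ) / r) + (π.col i).val := by
    rw [hcol i]; exact (Nat.div_add_mod _ r).symm
  have hdec' : (f (π.perm i') : ℕ) = r * ((f (π.perm i') : ℕ) / r) + (π.col i').val := by
    rw [hcol i']; exact (Nat.div_add_mod _ r).symm
  refine ⟨Nat.div_le_div_right hle, ?_⟩
  intro hdes
  obtain hcase := (mem_Des_internal π i i' rfl).mp hdes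
  have henc : r * ((f (π.perm i) : ℕ) / r) + (π.col i).val ≤
      r * ((f (π.perm i') : ℕ) / r) + (π.col i').val := by
    rw [← hdec, ← hdec']; exact hle
  have hdisj := (enc_le_iff (hE i) (hE i')).mp henc
  rcases hcase with hlt | ⟨heqE, hltp⟩
  · omega
  · rcases hdisj with h1 | ⟨h1, h2⟩
    · exact h1
    · exfalso
      have heqf : (f (π.perm i) : ℕ) = (f (π.perm i') : ℕ) := by
        rw [hdec, hdec', h1, heqE]
      have := htie i i' (by simp [Fin.lt_def, i, i']) heqf
      omega

lemma fwd_DB_le (π : ColoredPerm r n) (p : ℕ) (f : Fin n → Fin (r * p + 1))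
    (hf : wstd f = π) : ∀ i : Fin n, DB π i ≤ (f (π.perm i) : ℕ) / r := by
  obtain ⟨hcol, hstep⟩ := fwd_facts π p f hf
  suffices H : ∀ (k : ℕ) (hk : k < n), DB π ⟨k, hk⟩ ≤ (f (π.perm ⟨k, hk⟩) : ℕ) / r by
    rintro ⟨k, hk⟩; exact H k hk
  intro k
  induction k with
  | zero => intro hk; rw [DB_zero π ⟨0, hk⟩ rfl]; exact Nat.zero_le _
  | succ t ih =>
    intro hk
    have ht : t < n := by omega
    have hDB := DB_succ π ⟨t, ht⟩ ⟨t + 1, hk⟩ rfl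
    have hs := hstep t ht hk
    by_cases hdes : (⟨t, ht⟩ : Fin n) ∈ Des π
    · rw [if_pos hdes] at hDB
      have := hs.2 hdes
      have := ih ht
      omega
    · rw [if_neg hdes] at hDB
      have := hs.1
      have := ih ht
      omega

lemma fwd_DFr_le (π : ColoredPerm r n) (p : ℕ) (f : Fin n → Fin (r * p + 1))
    (hf : wstd f = π) : ∀ i : Fin n, (f (π.perm i) : ℕ) / r + DFr π i ≤ p := by
  have hr : 0 < r := Nat.pos_of_ne_zero (NeZero.ne r)
  have hE : ∀ i : Fin n, (π.col i).val < r := fun i => ZMod.val_lt _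
  obtain ⟨hcol, hstep⟩ := fwd_facts π p f hf
  have hbound : ∀ i : Fin n, (f (π.perm i) : ℕ) ≤ r * p := by
    intro i; have := (f (π.perm i)).isLt; omega
  have hub : ∀ i : Fin n, (f (π.perm i) : ℕ) / r ≤ p := by
    intro i
    have h1 : r * ((f (π.perm i) : ℕ) / r) ≤ (f (π.perm i) : ℕ) := Nat.mul_div_le _ r
    by_contra hc
    have h2 : p + 1 ≤ (f (π.perm i) : ℕ) / r := by omega
    have h3 : r * (p + 1) ≤ r * ((f (π.perm i) : ℕ) / r) := Nat.mul_le_mul_left r h2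
    have h4 : r * (p + 1) = r * p + r := Nat.mul_succ r p
    have := hbound i
    omega
  suffices H : ∀ (d k : ℕ) (hk : k < n), n - 1 - k = d →
      (f (π.perm ⟨k, hk⟩) : ℕ) / r + DFr π ⟨k, hk⟩ ≤ p by
    rintro ⟨k, hk⟩; exact H _ k hk rfl
  intro d
  induction d with
  | zero =>
    intro k hk hd
    have hlast : k + 1 = n := by omega
    have hDFl := DFr_last π ⟨k, hk⟩ hlast
    by_cases hdes : (⟨k, hk⟩ : Fin n) ∈ Des π
    · rw [if_pos hdes] at hDFl
      have hcolne : (π.col ⟨k, hk⟩).val ≠ 0 := (mem_Des_last π ⟨k, hk⟩ hlast).mp hdes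
      have hdec : (f (π.perm ⟨k, hk⟩) : ℕ)
          = r * ((f (π.perm ⟨k, hk⟩) : ℕ) / r) + (π.col ⟨k, hk⟩).val := by
        rw [hcol ⟨k, hk⟩]; exact (Nat.div_add_mod _ r).symm
      have hlt : (f (π.perm ⟨k, hk⟩) : ℕ) / r < p := by
        by_contra hc
        have h2 : p ≤ (f (π.perm ⟨k, hk⟩) : ℕ) / r := by omega
        have h3 : r * p ≤ r * ((f (π.perm ⟨k, hk⟩) : ℕ) / r) := Nat.mul_le_mul_left r h2
        have := hbound ⟨k, hk⟩
        omega
      omega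
    · rw [if_neg hdes] at hDFl
      have := hub ⟨k, hk⟩
      omega
  | succ d ih =>
    intro k hk hd
    have hk1 : k + 1 < n := by omega
    have hDFs := DFr_succ π ⟨k, hk⟩ ⟨k + 1, hk1⟩ rfl
    have hs := hstep k hk hk1
    have hnext := ih (k + 1) hk1 (by omega)
    by_cases hdes : (⟨k, hk⟩ : Fin n) ∈ Des π
    · rw [if_pos hdes] at hDFs
      have := hs.2 hdes
      omega
    · rw [if_neg hdes] at hDFs
      have := hs.1
      omega

lemma fwd_bound (π : ColoredPerm r n) (p : ℕ) (f : Fin n → Fin (r * p + 1))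
    (hf : wstd f = π) (i : Fin n) :
    (f (π.perm i) : ℕ) / r - DB π i < p + 1 - des π := by
  have h1 := fwd_DB_le π p f hf i
  have h2 := fwd_DFr_le π p f hf i
  have h3 := DB_add_DFr π i
  omega

/-- The number of monotone maps, our abstract fiber count. -/
def Nc (n p m : ℕ) : ℕ :=
  (Finset.univ.filter fun w : Fin n → Fin (p + 1 - m) =>
    ∀ a b : Fin n, a ≤ b → w a ≤ w b).card

lemma fiber_card (π : ColoredPerm r n) (p : ℕ) :
    (Finset.univ.filter fun f : Fin n → Fin (r * p + 1) => wstd f = π).card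
      = Nc n p (des π) := by
  have hr : 0 < r := Nat.pos_of_ne_zero (NeZero.ne r)
  rw [Nc]
  refine Finset.card_bij'
    (i := fun f hf => fun i : Fin n =>
      (⟨(f (π.perm i) : ℕ) / r - DB π i,
        fwd_bound π p f (Finset.mem_filter.mp hf).2 i⟩ : Fin (p + 1 - des π)))
    (j := fun w _ => bwdF π p w) ?hi ?hj ?leftinv ?rightinv
  case hi =>
    intro f hf
    rw [Finset.mem_filter]
    refine ⟨Finset.mem_univ _, ?_⟩
    intro a b hab
    rw [Fin.le_def]
    have hff := (Finset.mem_filter.mp hf).2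
    obtain ⟨hcol, hstep⟩ := fwd_facts π p f hff
    have hDBle := fwd_DB_le π p f hff
    refine fin_mono_of_adjacent (fun i => (f (π.perm i) : ℕ) / r - DB π i) ?_ a b hab
    intro k hk1 hk2
    have hDB := DB_succ π ⟨k, hk1⟩ ⟨k + 1, hk2⟩ rfl
    have hs := hstep k hk1 hk2
    have hd1 := hDBle ⟨k, hk1⟩
    have hd2 := hDBle ⟨k + 1, hk2⟩
    by_cases hdes : (⟨k, hk1⟩ : Fin n) ∈ Des π
    · rw [if_pos hdes] at hDB
      have := hs.2 hdes
      omega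
    · rw [if_neg hdes] at hDB
      have := hs.1
      omega
  case hj =>
    intro w hw
    rw [Finset.mem_filter]
    exact ⟨Finset.mem_univ _, bwd_mem π p w (Finset.mem_filter.mp hw).2⟩
  case leftinv =>
    intro f hf
    have hff := (Finset.mem_filter.mp hf).2
    obtain ⟨hcol, hstep⟩ := fwd_facts π p f hff
    have hDBle := fwd_DB_le π p f hff
    funext j
    apply Fin.ext
    set q : Fin n := π.perm⁻¹ j with hq
    have e2 : π.perm q = j := perm_apply_inv_self _ _
    show r * (((f (π.perm q) : ℕ) / r - DB π q) + DB π q) + (π.col q).val = (f j : ℕ)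
    rw [← e2]
    have h1 := hDBle q
    have hdm : r * ((f (π.perm q) : ℕ) / r) + (f (π.perm q) : ℕ) % r = (f (π.perm q) : ℕ) :=
      Nat.div_add_mod _ r
    have h2 := hcol q
    have e1 : ((f (π.perm q) : ℕ) / r - DB π q) + DB π q = (f (π.perm q) : ℕ) / r := by omega
    rw [e1]
    omega
  case rightinv =>
    intro w hw
    funext i
    apply Fin.ext
    show (bwdF π p w (π.perm i) : ℕ) / r - DB π i = (w i : ℕ)
    rw [bwdF_perm_apply π p w i]
    rw [Nat.mul_add_div hr]
    rw [Nat.div_eq_of_lt (ZMod.val_lt _)]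
    omega

end Fiber


section Assemble

variable {r n : ℕ} [NeZero r]

lemma Nc_eq_zero (hn : 0 < n) {p m : ℕ} (h : p < m) : Nc n p m = 0 := by
  rw [Nc, Finset.card_eq_zero, Finset.eq_empty_iff_forall_notMem]
  intro w hw
  have h1 : p + 1 - m = 0 := by omega
  have := (w ⟨0, hn⟩).isLt
  omega

lemma Nc_diag (p : ℕ) : Nc n p p = 1 := by
  rw [Nc]
  have h1 : p + 1 - p = 1 := by omega
  have he : (Finset.univ.filter fun w : Fin n → Fin (p + 1 - p) =>
      ∀ a b : Fin n, a ≤ b → w a ≤ w b) = Finset.univ := by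
    apply Finset.filter_true_of_mem
    intro w _ a b hab
    have h2 := (w a).isLt
    have h3 := (w b).isLt
    have : w a = w b := Fin.ext (by omega)
    exact le_of_eq this
  rw [he, Finset.card_univ, Fintype.card_fun]
  simp [h1]

lemma Xel_expand (p : ℕ) :
    Xel r n (r * p + 1) = ∑ m ∈ Finset.range (n + 1),
      ((Nc n p m : ℚ)) • eulerianBasis r n m := by
  rw [Xel]
  rw [← Finset.sum_fiberwise Finset.univ (fun f : Fin n → Fin (r * p + 1) => wstd (r := r) f)
      (fun f => MonoidAlgebra.of ℚ (ColoredPerm r n) (wstd f))]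
  have step1 : ∀ π : ColoredPerm r n,
      (∑ f ∈ Finset.univ.filter (fun f : Fin n → Fin (r * p + 1) => wstd f = π),
        MonoidAlgebra.of ℚ (ColoredPerm r n) (wstd f))
      = (Nc n p (des π) : ℚ) • MonoidAlgebra.of ℚ (ColoredPerm r n) π := by
    intro π
    rw [Finset.sum_congr rfl (fun f hf => by rw [(Finset.mem_filter.mp hf).2])]
    rw [Finset.sum_const, fiber_card π p, ← Nat.cast_smul_eq_nsmul ℚ]
  rw [Finset.sum_congr rfl (fun π _ => step1 π)]
  rw [← Finset.sum_fiberwise_of_maps_to (g := des) (t := Finset.range (n + 1))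
      (fun π _ => Finset.mem_range.mpr (Nat.lt_succ_of_le (des_le π))) _]
  apply Finset.sum_congr rfl
  intro m hm
  rw [eulerianBasis, Finset.smul_sum]
  apply Finset.sum_congr rfl
  intro π hπ
  rw [(Finset.mem_filter.mp hπ).2]

lemma C_mem_span (hn : 0 < n) :
    ∀ i, i ≤ n → eulerianBasis r n i ∈
      Submodule.span ℚ (Set.range fun t : Fin (n + 1) => Xel r n (r * t + 1)) := by
  intro i
  induction i using Nat.strong_induction_on with
  | _ i ih =>
    intro hi
    have hexp := Xel_expand (r := r) (n := n) i
    have hsplit : Xel r n (r * i + 1)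
        = (∑ m ∈ Finset.range i, (Nc n i m : ℚ) • eulerianBasis r n m)
          + eulerianBasis r n i := by
      rw [hexp]
      have h1 : ∑ m ∈ Finset.range (n + 1), ((Nc n i m : ℚ)) • eulerianBasis r n m
          = ∑ m ∈ Finset.range (i + 1), ((Nc n i m : ℚ)) • eulerianBasis r n m := by
        symm
        apply Finset.sum_subset
        · intro x hx
          rw [Finset.mem_range] at *
          omega
        · intro x hx hnx
          rw [Finset.mem_range] at hx hnx
          have hxi : i < x := by omega
          rw [Nc_eq_zero hn hxi]
          simp
      rw [h1, Finset.sum_range_succ, Nc_diag]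
      simp
    have hXmem : Xel r n (r * i + 1) ∈
        Submodule.span ℚ (Set.range fun t : Fin (n + 1) => Xel r n (r * t + 1)) := by
      apply Submodule.subset_span
      exact ⟨⟨i, by omega⟩, rfl⟩
    have heq : eulerianBasis r n i = Xel r n (r * i + 1)
        - ∑ m ∈ Finset.range i, (Nc n i m : ℚ) • eulerianBasis r n m := by
      rw [hsplit]
      abel
    rw [heq]
    apply Submodule.sub_mem
    · exact hXmem
    · apply Submodule.sum_mem
      intro m hm
      rw [Finset.mem_range] at hm
      exact Submodule.smul_mem _ _ (ih m hm (by omega))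

end Assemble

open scoped Pointwise


/-- The products `C_i · C_k` lie in the `ℚ`-span of `C_0, …, C_n`:
the colored Eulerian descent algebra is closed under multiplication. -/
theorem eulerian_descent_algebra (r n : ℕ) [NeZero r] (hn : 1 ≤ n)
    (i k : ℕ) (hi : i ≤ n) (hk : k ≤ n) :
    eulerianBasis r n i * eulerianBasis r n k ∈
      Submodule.span ℚ {x : MonoidAlgebra ℚ (ColoredPerm r n) |
        ∃ m ≤ n, x = eulerianBasis r n m} := by
  have hnn : 0 < n := hn
  set T : Submodule ℚ (MonoidAlgebra ℚ (ColoredPerm r n)) :=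
    Submodule.span ℚ {x : MonoidAlgebra ℚ (ColoredPerm r n) | ∃ m ≤ n, x = eulerianBasis r n m}
    with hT
  have hCi := C_mem_span (r := r) (n := n) hnn i hi
  have hCk := C_mem_span (r := r) (n := n) hnn k hk
  have hmul := Submodule.mul_mem_mul hCi hCk
  rw [Submodule.span_mul_span] at hmul
  have hsub : (Set.range fun t : Fin (n + 1) => Xel r n (r * t + 1)) *
      (Set.range fun t : Fin (n + 1) => Xel r n (r * t + 1)) ⊆ (T : Set _) := by
    rintro x ⟨a, ha, b, hb, rfl⟩
    obtain ⟨t, rfl⟩ := ha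
    obtain ⟨s, rfl⟩ := hb
    have hN : (((r * (t : ℕ) + 1 : ℕ)) : ZMod r) = 1 := by
      push_cast
      simp [ZMod.natCast_self]
    have hmm := Xel_mul (r := r) (n := n) (N := r * (t : ℕ) + 1) (M := r * (s : ℕ) + 1)
      (by omega) hN
    have harith : (r * (t : ℕ) + 1) * (r * (s : ℕ) + 1)
        = r * (r * (t : ℕ) * (s : ℕ) + (t : ℕ) + (s : ℕ)) + 1 := by ring
    rw [harith] at hmm
    show Xel r n (r * (t : ℕ) + 1) * Xel r n (r * (s : ℕ) + 1) ∈ (T : Set _)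
    rw [hmm, Xel_expand]
    apply Submodule.sum_mem
    intro m hm
    rw [Finset.mem_range] at hm
    apply Submodule.smul_mem
    apply Submodule.subset_span
    exact ⟨m, by omega, rfl⟩
  exact (Submodule.span_le.mpr hsub) hmul
end

section
/- For each i ∈ {0, …, n}, let c_i ∈ ℚ[G_{r,n}] be the coefficient of x^i when Σ_{π ∈ G_{r,n}} b((x − 1)/r − des(π))·π is expanded as a polynomial of degree at most n in the variable x with coefficients in ℚ[G_{r,n}], where b(z) = (1/n!)·∏_{m=1}^{n} (z + m). Then the c_i are pairwise orthogonal idempotents: c_i·c_j = 0 for all i ≠ j, and c_i·c_i = c_i for all i ∈ {0, …, n}. -/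
open scoped BigOperators

open ColoredPerm

/-- The polynomial (in the variable `x`, over `ℚ`)
`b((x − 1)/r − d) = (1/n!) ∏_{m=1}^{n} ((x − 1)/r − d + m)`. -/
noncomputable def idemPoly (r n : ℕ) (d : ℕ) : Polynomial ℚ :=
  Polynomial.C ((n.factorial : ℚ))⁻¹ *
    ∏ m ∈ Finset.Icc 1 n,
      (Polynomial.C ((r : ℚ))⁻¹ * (Polynomial.X - 1) -
        Polynomial.C (d : ℚ) + Polynomial.C (m : ℚ))

/-- `c_i`: the coefficient of `x^i` in `Σ_{π ∈ G_{r,n}} b((x−1)/r − des(π))·π`,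
viewed as an element of the group algebra `ℚ[G_{r,n}]`. -/
noncomputable def eulerianIdem (r n : ℕ) [NeZero r] (i : ℕ) :
    MonoidAlgebra ℚ (ColoredPerm r n) :=
  ∑ π : ColoredPerm r n,
    (idemPoly r n (des π)).coeff i • MonoidAlgebra.of ℚ (ColoredPerm r n) π



namespace EulerianAux

open Finset

/-- base-r lex comparison helpers -/
lemma rdm_step {r a a' : ℕ} (h : a < a') : r * a + r ≤ r * a' := by
  have : r * (a + 1) ≤ r * a' := Nat.mul_le_mul_left r h
  simpa [Nat.mul_add] using this

lemma rdm_lt_iff {r a a' s s' : ℕ} (hs : s < r) (hs' : s' < r) :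
    r * a + s < r * a' + s' ↔ (a < a' ∨ (a = a' ∧ s < s')) := by
  constructor
  · intro h
    rcases lt_trichotomy a a' with h1 | h1 | h1
    · exact Or.inl h1
    · subst h1; exact Or.inr ⟨rfl, by omega⟩
    · exfalso
      have h2 := rdm_step (r := r) h1
      omega
  · rintro (h1 | ⟨rfl, h2⟩)
    · have h2 := rdm_step (r := r) h1
      omega
    · omega

lemma rdm_eq_iff {r a a' s s' : ℕ} (hs : s < r) (hs' : s' < r) :
    r * a + s = r * a' + s' ↔ (a = a' ∧ s = s') := by
  constructor
  · intro h
    rcases lt_trichotomy a a' with h1 | h1 | h1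
    · have := rdm_step (r := r) h1; omega
    · subst h1; omega
    · have := rdm_step (r := r) h1; omega
  · rintro ⟨rfl, rfl⟩; rfl

/-- adjacency implies strict monotonicity for tuples on `Fin n` -/
lemma strictMono_of_adj {α : Type*} [Preorder α] {n : ℕ} {f : Fin n → α}
    (h : ∀ t (ht : t + 1 < n), f ⟨t, Nat.lt_of_succ_lt ht⟩ < f ⟨t + 1, ht⟩) :
    StrictMono f := by
  have key : ∀ k (i : Fin n) (hk : i.1 + k < n), 0 < k → f i < f ⟨i.1 + k, hk⟩ := by
    intro k
    induction k with
    | zero => omega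
    | succ m ih =>
      intro i hk _
      rcases Nat.eq_zero_or_pos m with hm | hm
      · subst hm
        exact h i.1 (by omega)
      · have h1 : f i < f ⟨i.1 + m, by omega⟩ := ih i (by omega) hm
        have h2 : f ⟨i.1 + m, by omega⟩ < f ⟨i.1 + (m + 1), hk⟩ := by
          have := h (i.1 + m) (by omega)
          simpa only [Nat.add_assoc] using this
        exact h1.trans h2
  intro i j hij
  have h2 : (⟨i.1 + (j.1 - i.1), by omega⟩ : Fin n) = j := Fin.ext (by simp; omega)
  have := key (j.1 - i.1) i (by omega) (by omega)
  rwa [h2] at this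

/-- gap bound for strictly monotone maps between Fin types (values) -/
lemma strictMono_gap {n M : ℕ} {f : Fin n → Fin M} (hf : StrictMono f)
    {i j : Fin n} (hij : i ≤ j) : (f i : ℕ) + (j.1 - i.1) ≤ f j := by
  have key : ∀ k (i : Fin n) (hk : i.1 + k < n), (f i : ℕ) + k ≤ f ⟨i.1 + k, hk⟩ := by
    intro k
    induction k with
    | zero =>
      intro i hk
      have h2 : (⟨i.1 + 0, hk⟩ : Fin n) = i := Fin.ext (by simp)
      rw [h2]
      omega
    | succ m ih =>
      intro i hk
      have h1 := ih i (by omega)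
      have h2 : f ⟨i.1 + m, by omega⟩ < f ⟨i.1 + (m + 1), hk⟩ := by
        apply hf
        simp [Fin.lt_def]
      have h2' : (f ⟨i.1 + m, by omega⟩ : ℕ) < f ⟨i.1 + (m + 1), hk⟩ := h2
      omega
  have := key (j.1 - i.1) i (by omega)
  have h2 : (⟨i.1 + (j.1 - i.1), by omega⟩ : Fin n) = j := Fin.ext (by simp; omega)
  rw [h2] at this
  omega

section DesFacts

open Finset ColoredPerm

variable {r n : ℕ} [NeZero r]

/-- color value of a letter -/
def sval (π : ColoredPerm r n) (j : Fin n) : ℕ := (π.col j).val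

lemma mem_Des_internal (π : ColoredPerm r n) {t : ℕ} (h1 : t < n) (h2 : t + 1 < n) :
    (⟨t, h1⟩ : Fin n) ∈ Des π ↔
      (sval π ⟨t + 1, h2⟩ < sval π ⟨t, h1⟩ ∨
        (sval π ⟨t + 1, h2⟩ = sval π ⟨t, h1⟩ ∧
          (π.perm ⟨t + 1, h2⟩ : ℕ) < (π.perm ⟨t, h1⟩ : ℕ))) := by
  rw [Des, Finset.mem_filter]
  simp only [Des, Finset.mem_filter, Finset.mem_univ, true_and, letterAt, letterLT, sval]
  rw [dif_pos h2, dif_pos h1]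
  simp only []
  omega

lemma mem_Des_last (π : ColoredPerm r n) {t : ℕ} (h1 : t < n) (h2 : t + 1 = n) :
    ((⟨t, h1⟩ : Fin n) ∈ Des π) ↔ sval π ⟨t, h1⟩ ≠ 0 := by
  rw [Des, Finset.mem_filter]
  simp only [Des, Finset.mem_filter, Finset.mem_univ, true_and, letterAt, letterLT, sval]
  rw [dif_neg (by omega), dif_pos h1]
  simp only []
  omega

/-- number of descents at positions `< t` -/
def Dlt (π : ColoredPerm r n) (t : ℕ) : ℕ :=
  ((Des π).filter (fun i => i.1 < t)).card

lemma Dlt_zero (π : ColoredPerm r n) : Dlt π 0 = 0 := by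
  simp [Dlt]

lemma Dlt_mono (π : ColoredPerm r n) {t t' : ℕ} (h : t ≤ t') : Dlt π t ≤ Dlt π t' := by
  apply Finset.card_le_card
  intro i hi
  simp only [Finset.mem_filter] at hi ⊢
  exact ⟨hi.1, by omega⟩

lemma Dlt_top (π : ColoredPerm r n) {t : ℕ} (h : n ≤ t) : Dlt π t = des π := by
  unfold Dlt des
  congr 1
  apply Finset.filter_true_of_mem
  intro i _
  exact lt_of_lt_of_le i.2 h

lemma Dlt_le (π : ColoredPerm r n) (t : ℕ) : Dlt π t ≤ des π :=
  Finset.card_le_card (Finset.filter_subset _ _)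

lemma Dlt_succ (π : ColoredPerm r n) {t : ℕ} (h : t < n) :
    Dlt π (t + 1) = Dlt π t + (if (⟨t, h⟩ : Fin n) ∈ Des π then 1 else 0) := by
  classical
  unfold Dlt
  have h1 : ((Des π).filter (fun i => i.1 < t + 1)) =
      ((Des π).filter (fun i => i.1 < t)) ∪ ((Des π).filter (fun i => i = ⟨t, h⟩)) := by
    rw [← Finset.filter_or]
    apply Finset.filter_congr
    intro i _
    constructor
    · intro hi
      rcases Nat.lt_or_ge i.1 t with h' | h'
      · exact Or.inl h'
      · exact Or.inr (Fin.ext (by simp only [Fin.val_mk]; omega))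
    · rintro (hi | rfl)
      · omega
      · simp
  rw [h1, Finset.card_union_of_disjoint]
  · congr 1
    rw [Finset.filter_eq']
    split_ifs with hmem <;> simp
  · rw [Finset.disjoint_left]
    rintro i hi1 hi2
    simp only [Finset.mem_filter] at hi1 hi2
    rcases hi2 with ⟨_, rfl⟩
    simp only [Fin.val_mk] at hi1
    omega

lemma Dlt_lt_of_mem (π : ColoredPerm r n) {t : ℕ} {i : Fin n} (hi : i ∈ Des π)
    (h : t ≤ i.1) : Dlt π t < des π := by
  apply Finset.card_lt_card
  constructor
  · exact Finset.filter_subset _ _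
  · intro hsub
    have := hsub hi
    simp only [Finset.mem_filter] at this
    omega

end DesFacts

section Std

open Finset ColoredPerm

variable {r n : ℕ} [NeZero r]

/-- the standardization of a word: sort positions and read off colors -/
def stdCP (r : ℕ) {n N : ℕ} (F : Fin n → Fin N) : ColoredPerm r n :=
  ⟨Tuple.sort F, fun j => ((F (Tuple.sort F j) : ℕ) : ZMod r)⟩

lemma stdCP_eq_iff {N : ℕ} (π : ColoredPerm r n) (F : Fin n → Fin N) :
    stdCP r F = π ↔
      (π.perm = Tuple.sort F ∧ ∀ j, ((F (π.perm j) : ℕ) : ZMod r) = π.col j) := by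
  constructor
  · rintro rfl
    exact ⟨rfl, fun j => rfl⟩
  · rintro ⟨h1, h2⟩
    refine ColoredPerm.ext h1.symm ?_
    funext j
    show ((F (Tuple.sort F j) : ℕ) : ZMod r) = π.col j
    rw [← h1]
    exact h2 j

lemma sort_eq_iff {N : ℕ} {F : Fin n → Fin N} {σ : Equiv.Perm (Fin n)} :
    σ = Tuple.sort F ↔
      StrictMono (fun j => toLex ((F (σ j) : ℕ), (σ j : ℕ))) := by
  rw [Tuple.eq_sort_iff]
  constructor
  · rintro ⟨hm, ht⟩ i j hij
    rw [Prod.Lex.lt_iff]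
    rcases lt_or_eq_of_le (hm hij.le) with h | h
    · exact Or.inl h
    · have h' : F (σ i) = F (σ j) := Fin.ext (congrArg Fin.val h)
      exact Or.inr ⟨congrArg Fin.val h, ht i j hij h'⟩
  · intro h
    constructor
    · intro i j hij
      rcases eq_or_lt_of_le hij with rfl | hij'
      · exact le_refl _
      · have := h hij'
        rw [Prod.Lex.lt_iff] at this
        rcases this with h' | ⟨h', _⟩
        · exact le_of_lt h'
        · exact le_of_eq (Fin.ext h')
    · intro i j hij heq
      have := h hij
      rw [Prod.Lex.lt_iff] at this
      rcases this with h' | ⟨_, h'⟩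
      · exact absurd (congrArg Fin.val heq) (Nat.ne_of_lt h')
      · exact h'

/-- first fiber equivalence: from words to compatible letter sequences -/
def fiberEquiv1 (π : ColoredPerm r n) (N : ℕ) :
    {F : Fin n → Fin N // stdCP r F = π} ≃
      {u : Fin n → Fin N //
        StrictMono (fun j => toLex ((u j : ℕ), (π.perm j : ℕ))) ∧
          ∀ j, ((u j : ℕ) : ZMod r) = π.col j} where
  toFun F := ⟨fun j => F.1 (π.perm j), by
    obtain ⟨h1, h2⟩ := (stdCP_eq_iff π F.1).mp F.2
    exact ⟨sort_eq_iff.mp h1, h2⟩⟩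
  invFun u := ⟨fun v => u.1 (π.perm⁻¹ v), by
    rw [stdCP_eq_iff]
    constructor
    · rw [sort_eq_iff]
      have : (fun j => toLex ((u.1 (π.perm⁻¹ (π.perm j)) : ℕ), (π.perm j : ℕ)))
          = fun j => toLex ((u.1 j : ℕ), (π.perm j : ℕ)) := by
        funext j; rw [Equiv.Perm.coe_inv, Equiv.symm_apply_apply]
      rw [this]
      exact u.2.1
    · intro j
      rw [Equiv.Perm.coe_inv, Equiv.symm_apply_apply]
      exact u.2.2 j⟩
  left_inv F := by
    apply Subtype.ext
    funext v
    show F.1 (π.perm (π.perm⁻¹ v)) = F.1 v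
    rw [Equiv.Perm.coe_inv, Equiv.apply_symm_apply]
  right_inv u := by
    apply Subtype.ext
    funext j
    show u.1 (π.perm⁻¹ (π.perm j)) = u.1 j
    rw [Equiv.Perm.coe_inv, Equiv.symm_apply_apply]

end Std

section Chain

open Finset ColoredPerm

variable {r n : ℕ} [NeZero r]

lemma hr_pos : 0 < r := Nat.pos_of_ne_zero (NeZero.ne r)

lemma sval_lt (π : ColoredPerm r n) (j : Fin n) : sval π j < r := ZMod.val_lt _

lemma adj_iff (π : ColoredPerm r n) {p : ℕ} (u : Fin n → Fin (r * p + 1))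
    (hmod : ∀ j, (u j : ℕ) % r = sval π j) {t : ℕ} (h1 : t < n) (h2 : t + 1 < n) :
    (toLex ((u ⟨t, h1⟩ : ℕ), (π.perm ⟨t, h1⟩ : ℕ)) <
        toLex ((u ⟨t + 1, h2⟩ : ℕ), (π.perm ⟨t + 1, h2⟩ : ℕ))) ↔
      (u ⟨t, h1⟩ : ℕ) / r + (if (⟨t, h1⟩ : Fin n) ∈ Des π then 1 else 0) ≤
        (u ⟨t + 1, h2⟩ : ℕ) / r := by
  have hs := sval_lt π ⟨t, h1⟩
  have hs' := sval_lt π ⟨t + 1, h2⟩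
  have e1 : (u ⟨t, h1⟩ : ℕ) = r * ((u ⟨t, h1⟩ : ℕ) / r) + sval π ⟨t, h1⟩ := by
    rw [← hmod ⟨t, h1⟩]; exact (Nat.div_add_mod _ r).symm
  have e2 : (u ⟨t + 1, h2⟩ : ℕ) = r * ((u ⟨t + 1, h2⟩ : ℕ) / r) + sval π ⟨t + 1, h2⟩ := by
    rw [← hmod ⟨t + 1, h2⟩]; exact (Nat.div_add_mod _ r).symm
  have hx : (π.perm ⟨t, h1⟩ : ℕ) ≠ (π.perm ⟨t + 1, h2⟩ : ℕ) := by
    intro h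
    have := π.perm.injective (Fin.ext h)
    have := congrArg Fin.val this
    simp only [Fin.val_mk] at this
    omega
  rw [Prod.Lex.lt_iff]
  dsimp only [ofLex_toLex]
  by_cases hdes : (⟨t, h1⟩ : Fin n) ∈ Des π
  · rw [if_pos hdes]
    rw [mem_Des_internal π h1 h2] at hdes
    constructor
    · rintro (hlt | ⟨heq, hperm⟩)
      · rw [e1, e2, rdm_lt_iff hs hs'] at hlt; omega
      · rw [e1, e2, rdm_eq_iff hs hs'] at heq; omega
    · intro h
      left
      rw [e1, e2, rdm_lt_iff hs hs']
      omega
  · rw [if_neg hdes]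
    rw [mem_Des_internal π h1 h2] at hdes
    push_neg at hdes
    constructor
    · rintro (hlt | ⟨heq, hperm⟩)
      · rw [e1, e2, rdm_lt_iff hs hs'] at hlt; omega
      · rw [e1, e2, rdm_eq_iff hs hs'] at heq; omega
    · intro h
      rcases eq_or_lt_of_le h with heqd | hltd
      · rcases Nat.lt_or_ge (sval π ⟨t, h1⟩) (sval π ⟨t + 1, h2⟩) with hsv | hsv
        · left; rw [e1, e2, rdm_lt_iff hs hs']; omega
        · have hsv' : sval π ⟨t, h1⟩ = sval π ⟨t + 1, h2⟩ := by omega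
          right
          refine ⟨by rw [e1, e2, rdm_eq_iff hs hs']; omega, ?_⟩
          have := hdes.2 hsv'.symm
          omega
      · left; rw [e1, e2, rdm_lt_iff hs hs']; omega

lemma last_bound (π : ColoredPerm r n) {p : ℕ} (u : Fin n → Fin (r * p + 1))
    (hmod : ∀ j, (u j : ℕ) % r = sval π j) {t : ℕ} (h1 : t < n) (h2 : t + 1 = n) :
    (u ⟨t, h1⟩ : ℕ) / r + (if (⟨t, h1⟩ : Fin n) ∈ Des π then 1 else 0) ≤ p := by
  have hs := sval_lt π ⟨t, h1⟩
  have hr := hr_pos (r := r)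
  have hb : (u ⟨t, h1⟩ : ℕ) < r * p + 1 := (u ⟨t, h1⟩).2
  have e1 : (u ⟨t, h1⟩ : ℕ) = r * ((u ⟨t, h1⟩ : ℕ) / r) + sval π ⟨t, h1⟩ := by
    rw [← hmod ⟨t, h1⟩]; exact (Nat.div_add_mod _ r).symm
  have hap : (u ⟨t, h1⟩ : ℕ) / r ≤ p := by
    rcases Nat.lt_or_ge p ((u ⟨t, h1⟩ : ℕ) / r) with h' | h'
    · have := rdm_step (r := r) h'
      omega
    · exact h'
  by_cases hsv : (⟨t, h1⟩ : Fin n) ∈ Des π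
  · rw [if_pos hsv]
    rw [mem_Des_last π h1 h2] at hsv
    rcases eq_or_lt_of_le hap with heq | hlt
    · rw [heq] at e1; omega
    · omega
  · rw [if_neg hsv]
    omega

/-- extended division-value sequence, with sentinel value `p` at position `n` -/
def Aval (r p : ℕ) {n N : ℕ} (u : Fin n → Fin N) (t : ℕ) : ℕ :=
  if h : t < n then (u ⟨t, h⟩ : ℕ) / r else p

lemma chain (π : ColoredPerm r n) {p : ℕ} (u : Fin n → Fin (r * p + 1))
    (hmod : ∀ j, (u j : ℕ) % r = sval π j)
    (hC : StrictMono (fun j => toLex ((u j : ℕ), (π.perm j : ℕ)))) :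
    ∀ t₁ t₂, t₁ ≤ t₂ → t₂ ≤ n →
      Aval r p u t₁ + (Dlt π t₂ - Dlt π t₁) ≤ Aval r p u t₂ := by
  intro t₁ t₂ h hn2
  induction t₂, h using Nat.le_induction with
  | base => omega
  | succ t₂ ht ih =>
    have ht2 : t₂ < n := by omega
    have ihh := ih (by omega)
    have hDsucc := Dlt_succ π ht2
    have hDmono := Dlt_mono π (le_trans ht (Nat.le_succ t₂))
    have hstep : Aval r p u t₂ + (if (⟨t₂, ht2⟩ : Fin n) ∈ Des π then 1 else 0) ≤
        Aval r p u (t₂ + 1) := by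
      rcases Nat.lt_or_ge (t₂ + 1) n with hint | hlast
      · have hlex : toLex ((u ⟨t₂, ht2⟩ : ℕ), (π.perm ⟨t₂, ht2⟩ : ℕ)) <
            toLex ((u ⟨t₂ + 1, hint⟩ : ℕ), (π.perm ⟨t₂ + 1, hint⟩ : ℕ)) := by
          exact hC (by simp [Fin.lt_def])
        have := (adj_iff π u hmod ht2 hint).mp hlex
        simp only [Aval]
        rw [dif_pos ht2, dif_pos hint]
        exact this
      · have hlast' : t₂ + 1 = n := by omega
        have := last_bound π u hmod ht2 hlast'
        simp only [Aval]
        rw [dif_pos ht2, dif_neg (show ¬ t₂ + 1 < n by omega)]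
        exact this
    have hD1 : Dlt π t₁ ≤ Dlt π t₂ := Dlt_mono π ht
    omega

lemma des_le_p (π : ColoredPerm r n) {p : ℕ} (u : Fin n → Fin (r * p + 1))
    (hmod : ∀ j, (u j : ℕ) % r = sval π j)
    (hC : StrictMono (fun j => toLex ((u j : ℕ), (π.perm j : ℕ)))) :
    des π ≤ p := by
  have := chain π u hmod hC 0 n (Nat.zero_le n) (le_refl n)
  rw [Dlt_zero, Dlt_top π (le_refl n)] at this
  simp only [Aval] at this
  rw [dif_neg (lt_irrefl n)] at this
  omega

/-- if there is no descent at any position `≥ j`, the color at `j` is zero -/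
lemma noDesc (π : ColoredPerm r n) :
    ∀ k (j : Fin n), n - j.1 ≤ k → Dlt π j.1 = des π → sval π j = 0 := by
  intro k
  induction k with
  | zero => intro j h _; have := j.2; omega
  | succ k ih =>
    intro j h hD
    have hnot : (j : Fin n) ∉ Des π := by
      intro hmem
      have := Dlt_lt_of_mem π hmem (le_refl j.1)
      omega
    rcases Nat.lt_or_ge (j.1 + 1) n with hint | hlast
    · have hjeq : (⟨j.1, j.2⟩ : Fin n) = j := Fin.ext rfl
      have hmem := mem_Des_internal π j.2 hint
      rw [hjeq] at hmem
      have hnd := hmem.not.mp hnot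
      push_neg at hnd
      have hD' : Dlt π (j.1 + 1) = des π := by
        have := Dlt_succ π j.2
        rw [hjeq, if_neg hnot] at this
        have := Dlt_le π (j.1 + 1)
        omega
      have h0 : sval π ⟨j.1 + 1, hint⟩ = 0 :=
        ih ⟨j.1 + 1, hint⟩ (by simp only [Fin.val_mk]; omega)
          (by simp only [Fin.val_mk]; exact hD')
      omega
    · have hjeq : (⟨j.1, j.2⟩ : Fin n) = j := Fin.ext rfl
      have hmem := mem_Des_last π j.2 (by omega)
      rw [hjeq] at hmem
      have := hmem.not.mp hnot
      omega

end Chain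

section Count

open Finset

variable {n m : ℕ}

abbrev MonoSub (n m : ℕ) := {b : Fin n → Fin (m + 1) // Monotone b}
abbrev SetSub (n m : ℕ) := {s : Finset (Fin (m + n)) // s.card = n}

def gMap (b : MonoSub n m) (j : Fin n) : Fin (m + n) :=
  ⟨(b.1 j : ℕ) + j.1, by have := (b.1 j).2; have := j.2; omega⟩

lemma gMap_strictMono (b : MonoSub n m) : StrictMono (gMap b) := by
  intro i j hij
  have h1 : (b.1 i : ℕ) ≤ b.1 j := b.2 hij.le
  have h2 : i.1 < j.1 := hij
  simp only [gMap, Fin.lt_def, Fin.val_mk]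
  omega

def toSet (b : MonoSub n m) : SetSub n m :=
  ⟨Finset.image (gMap b) univ, by
    rw [Finset.card_image_of_injective _ (gMap_strictMono b).injective, Finset.card_univ,
      Fintype.card_fin]⟩

lemma emb_lb (s : SetSub n m) (j : Fin n) : j.1 ≤ ((s.1.orderEmbOfFin s.2) j : ℕ) := by
  have hn0 : 0 < n := lt_of_le_of_lt (Nat.zero_le _) j.2
  have hlow := EulerianAux.strictMono_gap (s.1.orderEmbOfFin s.2).strictMono
    (i := (⟨0, hn0⟩ : Fin n)) (j := j) (by simp [Fin.le_def])
  simp only [Fin.val_mk] at hlow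
  omega

lemma emb_ub (s : SetSub n m) (j : Fin n) : ((s.1.orderEmbOfFin s.2) j : ℕ) - j.1 < m + 1 := by
  have hn0 : 0 < n := lt_of_le_of_lt (Nat.zero_le _) j.2
  have hhigh := EulerianAux.strictMono_gap (s.1.orderEmbOfFin s.2).strictMono
    (i := j) (j := (⟨n - 1, by omega⟩ : Fin n)) (by simp only [Fin.le_def, Fin.val_mk]; omega)
  have hb := ((s.1.orderEmbOfFin s.2) ⟨n - 1, by omega⟩).2
  simp only [Fin.val_mk] at hhigh
  omega

def fromSet (s : SetSub n m) : MonoSub n m :=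
  ⟨fun j => ⟨((s.1.orderEmbOfFin s.2) j : ℕ) - j.1, emb_ub s j⟩, by
    intro i j hij
    have hgap := EulerianAux.strictMono_gap (s.1.orderEmbOfFin s.2).strictMono
      (i := i) (j := j) hij
    have hlow := emb_lb s i
    have hij' : i.1 ≤ j.1 := hij
    simp only [Fin.le_def, Fin.val_mk]
    omega⟩

lemma gMap_fromSet (s : SetSub n m) (j : Fin n) :
    gMap (fromSet s) j = (s.1.orderEmbOfFin s.2) j := by
  apply Fin.ext
  simp only [gMap, fromSet, Fin.val_mk]
  have := emb_lb s j
  omega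

lemma monoEquiv_left (b : MonoSub n m) : fromSet (toSet b) = b := by
  apply Subtype.ext
  funext j
  have huniq : OrderEmbedding.ofStrictMono (gMap b) (gMap_strictMono b) =
      (toSet b).1.orderEmbOfFin (toSet b).2 := by
    apply Finset.orderEmbOfFin_unique'
    intro x
    exact Finset.mem_image_of_mem _ (Finset.mem_univ x)
  apply Fin.ext
  show (((toSet b).1.orderEmbOfFin (toSet b).2) j : ℕ) - j.1 = (b.1 j : ℕ)
  rw [← huniq]
  show (gMap b j : ℕ) - j.1 = (b.1 j : ℕ)
  simp only [gMap, Fin.val_mk]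
  omega

lemma monoEquiv_right (s : SetSub n m) : toSet (fromSet s) = s := by
  apply Subtype.ext
  show Finset.image (gMap (fromSet s)) univ = s.1
  have h1 : Finset.image (gMap (fromSet s)) univ =
      Finset.image (fun j => (s.1.orderEmbOfFin s.2) j) univ := by
    apply Finset.image_congr
    intro j _
    exact gMap_fromSet s j
  rw [h1]
  apply Finset.eq_of_subset_of_card_le
  · intro x hx
    rcases Finset.mem_image.mp hx with ⟨j, _, rfl⟩
    exact Finset.orderEmbOfFin_mem s.1 s.2 j
  · rw [s.2, Finset.card_image_of_injective _ (s.1.orderEmbOfFin s.2).injective,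
      Finset.card_univ, Fintype.card_fin]

/-- counting monotone maps between Fin types -/
lemma card_monotone (n m : ℕ) :
    Fintype.card {b : Fin n → Fin (m + 1) // Monotone b} = (m + n).choose n := by
  classical
  have e : MonoSub n m ≃ SetSub n m :=
    ⟨toSet, fromSet, monoEquiv_left, monoEquiv_right⟩
  rw [Fintype.card_congr e, Fintype.card_finset_len, Fintype.card_fin]

end Count

section Fiber2

open Finset ColoredPerm

variable {r n : ℕ} [NeZero r]

abbrev CompatSub (π : ColoredPerm r n) (p : ℕ) :=
  {u : Fin n → Fin (r * p + 1) //
    StrictMono (fun j => toLex ((u j : ℕ), (π.perm j : ℕ))) ∧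
      ∀ j, ((u j : ℕ) : ZMod r) = π.col j}

lemma compat_mod {π : ColoredPerm r n} {p : ℕ} (u : CompatSub π p) (j : Fin n) :
    (u.1 j : ℕ) % r = sval π j := by
  rw [sval, ← u.2.2 j, ZMod.val_natCast]

lemma Aval_at {p N : ℕ} (u : Fin n → Fin N) (j : Fin n) :
    Aval r p u j.1 = (u j : ℕ) / r := by
  simp only [Aval, dif_pos j.2, Fin.eta]

lemma compat_div_lb {π : ColoredPerm r n} {p : ℕ} (u : CompatSub π p) (j : Fin n) :
    Dlt π j.1 ≤ (u.1 j : ℕ) / r := by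
  have := chain π u.1 (compat_mod u) u.2.1 0 j.1 (Nat.zero_le _) j.2.le
  rw [Dlt_zero, Aval_at] at this
  omega

lemma compat_div_ub {π : ColoredPerm r n} {p : ℕ} (u : CompatSub π p) (j : Fin n) :
    (u.1 j : ℕ) / r + (des π - Dlt π j.1) ≤ p := by
  have := chain π u.1 (compat_mod u) u.2.1 j.1 n j.2.le (le_refl n)
  rw [Dlt_top π (le_refl n), Aval_at] at this
  simp only [Aval, dif_neg (lt_irrefl n)] at this
  exact this

def toB {π : ColoredPerm r n} {p : ℕ} (u : CompatSub π p) :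
    {b : Fin n → Fin (p - des π + 1) // Monotone b} :=
  ⟨fun j => ⟨(u.1 j : ℕ) / r - Dlt π j.1, by
    have h1 := compat_div_lb u j
    have h2 := compat_div_ub u j
    have h3 := Dlt_le π j.1
    omega⟩, by
    intro i j hij
    have hij' : i.1 ≤ j.1 := hij
    have := chain π u.1 (compat_mod u) u.2.1 i.1 j.1 hij' j.2.le
    rw [Aval_at, Aval_at] at this
    have h1 := compat_div_lb u i
    have h2 := Dlt_mono π hij'
    simp only [Fin.le_def, Fin.val_mk]
    omega⟩

lemma fromB_aux {π : ColoredPerm r n} {p : ℕ} (hdp : des π ≤ p)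
    (b : {b : Fin n → Fin (p - des π + 1) // Monotone b}) (j : Fin n) :
    r * ((b.1 j : ℕ) + Dlt π j.1) + sval π j < r * p + 1 := by
  have hb : (b.1 j : ℕ) < p - des π + 1 := (b.1 j).2
  have hD := Dlt_le π j.1
  have hs := sval_lt π j
  have hle : (b.1 j : ℕ) + Dlt π j.1 ≤ p := by omega
  rcases eq_or_lt_of_le hle with heq | hlt
  · have hDd : Dlt π j.1 = des π := by omega
    have h0 : sval π j = 0 := noDesc π n j (by omega) hDd
    rw [heq, h0]
    omega
  · have := rdm_step (r := r) hlt
    omega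

def fromB {π : ColoredPerm r n} {p : ℕ} (hdp : des π ≤ p)
    (b : {b : Fin n → Fin (p - des π + 1) // Monotone b}) : CompatSub π p := by
  refine ⟨fun j => ⟨r * ((b.1 j : ℕ) + Dlt π j.1) + sval π j, fromB_aux hdp b j⟩, ?_, ?_⟩
  · -- strict monotone
    have hmod : ∀ j : Fin n,
        (r * ((b.1 j : ℕ) + Dlt π j.1) + sval π j) % r = sval π j := by
      intro j
      rw [Nat.mul_add_mod, Nat.mod_eq_of_lt (sval_lt π j)]
    apply strictMono_of_adj
    intro t ht
    have h1 : t < n := Nat.lt_of_succ_lt ht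
    refine (adj_iff π (fun j => ⟨r * ((b.1 j : ℕ) + Dlt π j.1) + sval π j,
      fromB_aux hdp b j⟩) hmod h1 ht).mpr ?_
    simp only [Fin.val_mk]
    rw [Nat.mul_add_div (hr_pos (r := r)), Nat.mul_add_div (hr_pos (r := r)),
      Nat.div_eq_of_lt (sval_lt π _), Nat.div_eq_of_lt (sval_lt π _)]
    have hmono : (b.1 ⟨t, h1⟩ : ℕ) ≤ (b.1 ⟨t + 1, ht⟩ : ℕ) := b.2 (by simp [Fin.le_def])
    have hsucc := Dlt_succ π h1
    omega
  · -- colors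
    intro j
    have hs := sval_lt π j
    push_cast
    rw [ZMod.natCast_self]
    simp only [zero_mul, zero_add]
    exact ZMod.natCast_rightInverse (π.col j)

lemma toB_fromB {π : ColoredPerm r n} {p : ℕ} (hdp : des π ≤ p)
    (b : {b : Fin n → Fin (p - des π + 1) // Monotone b}) : toB (fromB hdp b) = b := by
  apply Subtype.ext
  funext j
  apply Fin.ext
  show (r * ((b.1 j : ℕ) + Dlt π j.1) + sval π j) / r - Dlt π j.1 = (b.1 j : ℕ)
  rw [Nat.mul_add_div (hr_pos (r := r)), Nat.div_eq_of_lt (sval_lt π _)]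
  omega

lemma fromB_toB {π : ColoredPerm r n} {p : ℕ} (hdp : des π ≤ p)
    (u : CompatSub π p) : fromB hdp (toB u) = u := by
  apply Subtype.ext
  funext j
  apply Fin.ext
  show r * ((u.1 j : ℕ) / r - Dlt π j.1 + Dlt π j.1) + sval π j = (u.1 j : ℕ)
  have h1 := compat_div_lb u j
  rw [Nat.sub_add_cancel h1, ← compat_mod u j]
  exact Nat.div_add_mod _ r

lemma card_fiber (π : ColoredPerm r n) (p : ℕ) :
    Fintype.card {F : Fin n → Fin (r * p + 1) // stdCP r F = π} =
      if des π ≤ p then (p - des π + n).choose n else 0 := by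
  classical
  split_ifs with hdp
  · have e : {F : Fin n → Fin (r * p + 1) // stdCP r F = π} ≃
        {b : Fin n → Fin (p - des π + 1) // Monotone b} :=
      (fiberEquiv1 π (r * p + 1)).trans
        ⟨toB, fromB hdp, fromB_toB hdp, toB_fromB hdp⟩
    rw [Fintype.card_congr e, card_monotone]
  · rw [Fintype.card_eq_zero_iff]
    constructor
    intro F
    have u := (fiberEquiv1 π (r * p + 1)) F
    exact hdp (des_le_p π u.1 (compat_mod u) u.2.1)

end Fiber2

section Product

open Finset ColoredPerm

variable {r n : ℕ} [NeZero r]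

lemma NpNq (r p q : ℕ) : (r * p + 1) * (r * q + 1) = r * (r * p * q + p + q) + 1 := by ring

def combine {p q : ℕ} (a : Fin (r * p + 1)) (b : Fin (r * q + 1)) :
    Fin (r * (r * p * q + p + q) + 1) :=
  ⟨(r * p + 1) * (b : ℕ) + (a : ℕ), by
    have ha : (a : ℕ) < r * p + 1 := a.2
    have hb : (b : ℕ) + 1 ≤ r * q + 1 := b.2
    have h1 : (r * p + 1) * ((b : ℕ) + 1) ≤ (r * p + 1) * (r * q + 1) :=
      Nat.mul_le_mul_left _ hb
    rw [Nat.mul_add, Nat.mul_one] at h1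
    rw [← NpNq r p q]
    omega⟩

lemma combine_val {p q : ℕ} (a : Fin (r * p + 1)) (b : Fin (r * q + 1)) :
    (combine a b : ℕ) = (r * p + 1) * (b : ℕ) + (a : ℕ) := rfl

lemma combine_lt_iff {p q : ℕ} (a a' : Fin (r * p + 1)) (b b' : Fin (r * q + 1)) :
    (combine a b : ℕ) < (combine a' b' : ℕ) ↔
      ((b : ℕ) < (b' : ℕ) ∨ ((b : ℕ) = (b' : ℕ) ∧ (a : ℕ) < (a' : ℕ))) := by
  rw [combine_val, combine_val]
  exact rdm_lt_iff a.2 a'.2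

lemma combine_eq_iff {p q : ℕ} (a a' : Fin (r * p + 1)) (b b' : Fin (r * q + 1)) :
    (combine a b : ℕ) = (combine a' b' : ℕ) ↔
      ((b : ℕ) = (b' : ℕ) ∧ (a : ℕ) = (a' : ℕ)) := by
  rw [combine_val, combine_val]
  exact rdm_eq_iff a.2 a'.2

/-- the key multiplicativity of standardization -/
lemma stdCP_mul {p q : ℕ} (F : Fin n → Fin (r * p + 1)) (F' : Fin n → Fin (r * q + 1)) :
    stdCP r (fun v => combine (F v) (F' ((Tuple.sort F)⁻¹ v))) =
      stdCP r F * stdCP r F' := by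
  have hF : StrictMono (fun j => toLex ((F (Tuple.sort F j) : ℕ), (Tuple.sort F j : ℕ))) :=
    sort_eq_iff.mp rfl
  have hF' : StrictMono (fun j => toLex ((F' (Tuple.sort F' j) : ℕ), (Tuple.sort F' j : ℕ))) :=
    sort_eq_iff.mp rfl
  set σ := Tuple.sort F with hσ
  set τ := Tuple.sort F' with hτ
  set H := fun v => combine (F v) (F' (σ⁻¹ v)) with hH
  rw [stdCP_eq_iff]
  have hperm : (stdCP r F * stdCP r F').perm = σ * τ := rfl
  have hHval : ∀ j, H ((σ * τ) j) = combine (F (σ (τ j))) (F' (τ j)) := by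
    intro j
    show combine (F ((σ * τ) j)) (F' (σ⁻¹ ((σ * τ) j))) = _
    have h1 : (σ * τ) j = σ (τ j) := rfl
    rw [h1, Equiv.Perm.coe_inv, Equiv.symm_apply_apply]
  constructor
  · rw [hperm, sort_eq_iff]
    intro i j hij
    rw [Prod.Lex.lt_iff]
    dsimp only [ofLex_toLex]
    rw [hHval i, hHval j]
    have hlex' := hF' hij
    rw [Prod.Lex.lt_iff] at hlex'
    dsimp only [ofLex_toLex] at hlex'
    rcases hlex' with hb | ⟨hb, hτij⟩
    · left
      rw [combine_lt_iff]
      exact Or.inl hb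
    · have hτij' : τ i < τ j := hτij
      have hlex := hF hτij'
      rw [Prod.Lex.lt_iff] at hlex
      dsimp only [ofLex_toLex] at hlex
      rcases hlex with ha | ⟨ha, hσij⟩
      · left
        rw [combine_lt_iff]
        exact Or.inr ⟨hb, ha⟩
      · right
        constructor
        · rw [combine_eq_iff]; exact ⟨hb, ha⟩
        · exact hσij
  · intro j
    have hcol : (stdCP r F * stdCP r F').col j =
        ((F (σ (τ j)) : ℕ) : ZMod r) + ((F' (τ j) : ℕ) : ZMod r) := rfl
    rw [hperm, hcol, hHval j, combine_val]
    push_cast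
    rw [ZMod.natCast_self]
    ring

def split1 {p q : ℕ} (h : Fin (r * (r * p * q + p + q) + 1)) : Fin (r * p + 1) :=
  ⟨(h : ℕ) % (r * p + 1), Nat.mod_lt _ (Nat.succ_pos _)⟩

def split2 {p q : ℕ} (h : Fin (r * (r * p * q + p + q) + 1)) : Fin (r * q + 1) :=
  ⟨(h : ℕ) / (r * p + 1), by
    have hb : (h : ℕ) < (r * p + 1) * (r * q + 1) := by rw [NpNq]; exact h.2
    exact Nat.div_lt_of_lt_mul hb⟩

lemma split1_combine {p q : ℕ} (a : Fin (r * p + 1)) (b : Fin (r * q + 1)) :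
    split1 (combine a b) = a := by
  apply Fin.ext
  show ((r * p + 1) * (b : ℕ) + (a : ℕ)) % (r * p + 1) = a
  rw [Nat.mul_add_mod, Nat.mod_eq_of_lt a.2]

lemma split2_combine {p q : ℕ} (a : Fin (r * p + 1)) (b : Fin (r * q + 1)) :
    split2 (combine a b) = b := by
  apply Fin.ext
  show ((r * p + 1) * (b : ℕ) + (a : ℕ)) / (r * p + 1) = b
  rw [Nat.mul_add_div (Nat.succ_pos _), Nat.div_eq_of_lt a.2, Nat.add_zero]

lemma combine_split {p q : ℕ} (h : Fin (r * (r * p * q + p + q) + 1)) :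
    combine (split1 (p := p) (q := q) h) (split2 h) = h := by
  apply Fin.ext
  show (r * p + 1) * ((h : ℕ) / (r * p + 1)) + (h : ℕ) % (r * p + 1) = (h : ℕ)
  exact Nat.div_add_mod _ _

def prodEquiv (r : ℕ) [NeZero r] (n p q : ℕ) :
    ((Fin n → Fin (r * p + 1)) × (Fin n → Fin (r * q + 1))) ≃
      (Fin n → Fin (r * (r * p * q + p + q) + 1)) where
  toFun FF := fun v => combine (FF.1 v) (FF.2 ((Tuple.sort FF.1)⁻¹ v))
  invFun H :=
    (fun v => split1 (H v),
      fun j => split2 (H (Tuple.sort (fun v => split1 (H v) : Fin n → Fin (r * p + 1)) j)))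
  left_inv := by
    rintro ⟨F, F'⟩
    have hfst : (fun v => split1 (combine (F v) (F' ((Tuple.sort F)⁻¹ v)))) = F := by
      funext v
      exact split1_combine _ _
    refine Prod.ext hfst ?_
    show (fun j => split2 ((fun v => combine (F v) (F' ((Tuple.sort F)⁻¹ v)))
      (Tuple.sort (fun v => split1 (combine (F v) (F' ((Tuple.sort F)⁻¹ v)))) j))) = F'
    rw [hfst]
    funext j
    dsimp only
    rw [Equiv.Perm.coe_inv, Equiv.symm_apply_apply, split2_combine]
  right_inv := by
    intro H
    funext v
    show combine (split1 (H v)) (split2 (H (Tuple.sort (fun v => split1 (H v))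
      ((Tuple.sort (fun v => split1 (H v)))⁻¹ v)))) = H v
    rw [Equiv.Perm.coe_inv, Equiv.apply_symm_apply]
    exact combine_split (H v)

end Product

section Algebra

open Finset ColoredPerm

variable {r n : ℕ} [NeZero r]

lemma prod_Icc_factorial (k : ℕ) : ∀ N : ℕ,
    (∏ m ∈ Icc 1 N, (k + m)) * k.factorial = (k + N).factorial := by
  intro N
  induction N with
  | zero => simp
  | succ N ih =>
    rw [Finset.prod_Icc_succ_top (by omega : 1 ≤ N + 1)]
    have : (k + (N + 1)).factorial = (k + N + 1) * (k + N).factorial := by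
      rw [show k + (N + 1) = (k + N) + 1 by ring, Nat.factorial_succ]
    rw [this, ← ih]
    ring

lemma eval_idemPoly (p d : ℕ) (hd : d ≤ n) :
    Polynomial.eval (((r * p + 1 : ℕ) : ℚ)) (idemPoly r n d) =
      if d ≤ p then (((p - d + n).choose n : ℕ) : ℚ) else 0 := by
  have hr : (r : ℚ) ≠ 0 := Nat.cast_ne_zero.mpr (NeZero.ne r)
  rw [idemPoly, Polynomial.eval_mul, Polynomial.eval_C, Polynomial.eval_prod]
  have hfac : ∀ m ∈ Icc 1 n,
      Polynomial.eval (((r * p + 1 : ℕ) : ℚ))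
        (Polynomial.C ((r : ℚ))⁻¹ * (Polynomial.X - 1) -
          Polynomial.C ((d : ℕ) : ℚ) + Polynomial.C ((m : ℕ) : ℚ)) =
        (p : ℚ) - d + m := by
    intro m _
    simp only [Polynomial.eval_add, Polynomial.eval_sub, Polynomial.eval_mul,
      Polynomial.eval_C, Polynomial.eval_X, Polynomial.eval_one]
    have h1 : (((r * p + 1 : ℕ) : ℚ)) - 1 = (r : ℚ) * p := by push_cast; ring
    rw [h1, ← mul_assoc, inv_mul_cancel₀ hr, one_mul]
  rw [Finset.prod_congr rfl hfac]
  split_ifs with hdp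
  · have hk : (p : ℚ) - d = ((p - d : ℕ) : ℚ) := by
      rw [Nat.cast_sub hdp]
    set k := p - d with hkdef
    have hprod : (∏ m ∈ Icc 1 n, ((p : ℚ) - d + m)) = (((∏ m ∈ Icc 1 n, (k + m)) : ℕ) : ℚ) := by
      rw [Nat.cast_prod]
      apply Finset.prod_congr rfl
      intro m _
      rw [hk]
      push_cast
      ring
    rw [hprod]
    have h1 := prod_Icc_factorial k n
    have h2 : (k + n).choose n * n.factorial * k.factorial = (k + n).factorial := by
      have := Nat.choose_mul_factorial_mul_factorial (show n ≤ k + n by omega)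
      rwa [Nat.add_sub_cancel] at this
    have h3 : (∏ m ∈ Icc 1 n, (k + m)) = (k + n).choose n * n.factorial :=
      Nat.eq_of_mul_eq_mul_right (Nat.factorial_pos k) (h1.trans h2.symm)
    rw [h3]
    have hnf : ((n.factorial : ℕ) : ℚ) ≠ 0 := Nat.cast_ne_zero.mpr (Nat.factorial_ne_zero n)
    push_cast
    field_simp
  · rw [Finset.prod_eq_zero (i := d - p), mul_zero]
    · rw [Finset.mem_Icc]
      omega
    · rw [Nat.cast_sub (le_of_lt (not_le.mp hdp))]
      ring

/-- the sum `Σ_π b((x−1)/r − des π)·π` evaluated at a rational `x` -/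
noncomputable def sEval (r n : ℕ) [NeZero r] (x : ℚ) : MonoidAlgebra ℚ (ColoredPerm r n) :=
  ∑ π : ColoredPerm r n,
    (Polynomial.eval x (idemPoly r n (des π))) • MonoidAlgebra.of ℚ (ColoredPerm r n) π

lemma sum_std (p : ℕ) :
    ∑ F : Fin n → Fin (r * p + 1), MonoidAlgebra.of ℚ (ColoredPerm r n) (stdCP r F) =
      sEval r n ((r * p + 1 : ℕ) : ℚ) := by
  classical
  rw [sEval,
    ← Fintype.sum_fiberwise (stdCP r)
      (fun F : Fin n → Fin (r * p + 1) => MonoidAlgebra.of ℚ (ColoredPerm r n) (stdCP r F))]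
  apply Finset.sum_congr rfl
  intro π _
  have hdes : des π ≤ n := by simpa [des] using Finset.card_le_univ (Des π)
  have h1 : ∑ F : {F : Fin n → Fin (r * p + 1) // stdCP r F = π},
      MonoidAlgebra.of ℚ (ColoredPerm r n) (stdCP r F.1) =
      (Fintype.card {F : Fin n → Fin (r * p + 1) // stdCP r F = π}) •
        MonoidAlgebra.of ℚ (ColoredPerm r n) π := by
    rw [← Finset.card_univ, ← Finset.sum_const]
    apply Finset.sum_congr rfl
    intro F _
    rw [F.2]
  rw [h1, card_fiber π p, eval_idemPoly p (des π) hdes, ← Nat.cast_smul_eq_nsmul ℚ]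
  congr 1
  split_ifs <;> simp

lemma sEval_mul (p q : ℕ) :
    sEval r n ((r * p + 1 : ℕ) : ℚ) * sEval r n ((r * q + 1 : ℕ) : ℚ) =
      sEval r n ((r * (r * p * q + p + q) + 1 : ℕ) : ℚ) := by
  classical
  rw [← sum_std p, ← sum_std q, ← sum_std (r * p * q + p + q), Finset.sum_mul_sum,
    ← Fintype.sum_prod_type']
  apply Fintype.sum_equiv (prodEquiv r n p q)
  rintro ⟨F, F'⟩
  show MonoidAlgebra.of ℚ (ColoredPerm r n) (stdCP r F) *
      MonoidAlgebra.of ℚ (ColoredPerm r n) (stdCP r F') = _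
  rw [← map_mul, ← stdCP_mul F F']
  rfl

end Algebra

section Final

open Finset ColoredPerm

variable {r n : ℕ} [NeZero r]

lemma natDegree_idemPoly (d : ℕ) : (idemPoly r n d).natDegree ≤ n := by
  rw [idemPoly]
  refine le_trans (Polynomial.natDegree_mul_le) ?_
  rw [Polynomial.natDegree_C, zero_add]
  refine le_trans (Polynomial.natDegree_prod_le _ _) ?_
  have hone : ∀ m ∈ Icc 1 n,
      (Polynomial.C ((r : ℚ))⁻¹ * (Polynomial.X - 1) -
        Polynomial.C ((d : ℕ) : ℚ) + Polynomial.C ((m : ℕ) : ℚ)).natDegree ≤ 1 := by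
    intro m _
    compute_degree
  refine le_trans (Finset.sum_le_sum hone) ?_
  rw [Finset.sum_const, Nat.card_Icc, smul_eq_mul, mul_one]
  omega

lemma sEval_expand (x : ℚ) :
    sEval r n x = ∑ k ∈ range (n + 1), x ^ k • eulerianIdem r n k := by
  rw [sEval]
  have h1 : ∀ π : ColoredPerm r n,
      Polynomial.eval x (idemPoly r n (des π)) =
        ∑ k ∈ range (n + 1), (idemPoly r n (des π)).coeff k * x ^ k := fun π =>
    Polynomial.eval_eq_sum_range'
      (lt_of_le_of_lt (natDegree_idemPoly (des π)) (Nat.lt_succ_self n)) x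
  calc ∑ π : ColoredPerm r n,
        (Polynomial.eval x (idemPoly r n (des π))) • MonoidAlgebra.of ℚ (ColoredPerm r n) π
      = ∑ π : ColoredPerm r n, ∑ k ∈ range (n + 1),
          ((idemPoly r n (des π)).coeff k * x ^ k) • MonoidAlgebra.of ℚ (ColoredPerm r n) π := by
        apply Finset.sum_congr rfl
        intro π _
        rw [h1 π, Finset.sum_smul]
    _ = ∑ k ∈ range (n + 1), ∑ π : ColoredPerm r n,
          ((idemPoly r n (des π)).coeff k * x ^ k) • MonoidAlgebra.of ℚ (ColoredPerm r n) π :=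
        Finset.sum_comm
    _ = ∑ k ∈ range (n + 1), x ^ k • ∑ π : ColoredPerm r n,
          (idemPoly r n (des π)).coeff k • MonoidAlgebra.of ℚ (ColoredPerm r n) π := by
        apply Finset.sum_congr rfl
        intro k _
        rw [Finset.smul_sum]
        apply Finset.sum_congr rfl
        intro π _
        rw [smul_smul, mul_comm]
    _ = ∑ k ∈ range (n + 1), x ^ k • eulerianIdem r n k := rfl

lemma vanish (m : ℕ) (g : ℕ → MonoidAlgebra ℚ (ColoredPerm r n))
    (h : ∀ p : ℕ, ∑ k ∈ range m, (((r * p + 1 : ℕ) : ℚ)) ^ k • g k = 0) :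
    ∀ k ∈ range m, g k = 0 := by
  intro k hk
  apply MonoidAlgebra.ext
  apply Finsupp.ext
  intro γ
  have hφ : ∀ v : MonoidAlgebra ℚ (ColoredPerm r n),
      ((Finsupp.lapply γ).comp (MonoidAlgebra.coeffLinearEquiv ℚ).toLinearMap : MonoidAlgebra ℚ (ColoredPerm r n) →ₗ[ℚ] ℚ) v = v.coeff γ :=
    fun v => rfl
  set f : Polynomial ℚ :=
    ∑ i ∈ range m,
      Polynomial.C (((Finsupp.lapply γ).comp (MonoidAlgebra.coeffLinearEquiv ℚ).toLinearMap : MonoidAlgebra ℚ (ColoredPerm r n) →ₗ[ℚ] ℚ) (g i)) *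
        Polynomial.X ^ i with hf
  have hroot : ∀ p : ℕ, f.IsRoot (((r * p + 1 : ℕ) : ℚ)) := by
    intro p
    have hγ := congrArg (⇑((Finsupp.lapply γ).comp (MonoidAlgebra.coeffLinearEquiv ℚ).toLinearMap : MonoidAlgebra ℚ (ColoredPerm r n) →ₗ[ℚ] ℚ)) (h p)
    rw [map_sum, map_zero] at hγ
    simp only [map_smul, smul_eq_mul] at hγ
    rw [Polynomial.IsRoot, hf, Polynomial.eval_finset_sum]
    simp only [Polynomial.eval_mul, Polynomial.eval_C, Polynomial.eval_pow, Polynomial.eval_X]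
    rw [← hγ]
    apply Finset.sum_congr rfl
    intro i _
    ring
  have hinf : {x : ℚ | f.IsRoot x}.Infinite := by
    apply Set.infinite_of_injective_forall_mem
      (f := fun p : ℕ => ((r * p + 1 : ℕ) : ℚ))
    · intro a b hab
      have hr := hr_pos (r := r)
      have h1 : (r * a + 1 : ℕ) = (r * b + 1 : ℕ) := Nat.cast_inj.mp hab
      have h2 : r * a = r * b := by omega
      exact Nat.eq_of_mul_eq_mul_left hr h2
    · intro p
      exact hroot p
  have hf0 : f = 0 := Polynomial.eq_zero_of_infinite_isRoot f hinf
  have hcoeff := congrArg (fun φ => Polynomial.coeff φ k) hf0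
  simp only [hf, Polynomial.finset_sum_coeff, Polynomial.coeff_C_mul,
    Polynomial.coeff_X_pow, Polynomial.coeff_zero, mul_ite, mul_one, mul_zero,
    Finset.sum_ite_eq, hk, if_pos] at hcoeff
  rw [← hφ (g k)]
  simpa using hcoeff

lemma key1 (p : ℕ) : ∀ j ∈ range (n + 1),
    sEval r n ((r * p + 1 : ℕ) : ℚ) * eulerianIdem r n j =
      (((r * p + 1 : ℕ) : ℚ)) ^ j • eulerianIdem r n j := by
  have hsum : ∀ q : ℕ, ∑ j ∈ range (n + 1), (((r * q + 1 : ℕ) : ℚ)) ^ j •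
      (sEval r n ((r * p + 1 : ℕ) : ℚ) * eulerianIdem r n j -
        (((r * p + 1 : ℕ) : ℚ)) ^ j • eulerianIdem r n j) = 0 := by
    intro q
    set x := ((r * p + 1 : ℕ) : ℚ) with hx
    set y := ((r * q + 1 : ℕ) : ℚ) with hy
    have hxy : x * y = ((r * (r * p * q + p + q) + 1 : ℕ) : ℚ) := by
      rw [hx, hy]; push_cast; ring
    have hmul := sEval_mul (r := r) (n := n) p q
    rw [← hx, ← hy, ← hxy] at hmul
    calc ∑ j ∈ range (n + 1), y ^ j •
          (sEval r n x * eulerianIdem r n j - x ^ j • eulerianIdem r n j)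
        = (∑ j ∈ range (n + 1), y ^ j • (sEval r n x * eulerianIdem r n j)) -
            ∑ j ∈ range (n + 1), y ^ j • (x ^ j • eulerianIdem r n j) := by
          rw [← Finset.sum_sub_distrib]
          apply Finset.sum_congr rfl
          intro j _
          rw [smul_sub]
      _ = sEval r n x * sEval r n y -
            ∑ j ∈ range (n + 1), (x * y) ^ j • eulerianIdem r n j := by
          congr 1
          · rw [sEval_expand y, Finset.mul_sum]
            apply Finset.sum_congr rfl
            intro j _
            rw [mul_smul_comm]
          · apply Finset.sum_congr rfl
            intro j _
            rw [smul_smul, mul_pow, mul_comm (x ^ j) (y ^ j)]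
      _ = sEval r n x * sEval r n y - sEval r n (x * y) := by rw [sEval_expand (x * y)]
      _ = 0 := by rw [hmul, sub_self]
  intro j hj
  have := vanish (n + 1)
    (fun j => sEval r n ((r * p + 1 : ℕ) : ℚ) * eulerianIdem r n j -
      (((r * p + 1 : ℕ) : ℚ)) ^ j • eulerianIdem r n j) hsum j hj
  exact sub_eq_zero.mp this

lemma key2 : ∀ j ∈ range (n + 1), ∀ i ∈ range (n + 1),
    eulerianIdem r n i * eulerianIdem r n j =
      if i = j then eulerianIdem r n j else 0 := by
  intro j hj
  have hsum : ∀ p : ℕ, ∑ i ∈ range (n + 1), (((r * p + 1 : ℕ) : ℚ)) ^ i •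
      (eulerianIdem r n i * eulerianIdem r n j -
        (if i = j then eulerianIdem r n j else 0)) = 0 := by
    intro p
    set x := ((r * p + 1 : ℕ) : ℚ) with hx
    calc ∑ i ∈ range (n + 1), x ^ i •
          (eulerianIdem r n i * eulerianIdem r n j -
            (if i = j then eulerianIdem r n j else 0))
        = (∑ i ∈ range (n + 1), x ^ i • (eulerianIdem r n i * eulerianIdem r n j)) -
            ∑ i ∈ range (n + 1), x ^ i • (if i = j then eulerianIdem r n j else 0) := by
          rw [← Finset.sum_sub_distrib]
          apply Finset.sum_congr rfl
          intro i _
          rw [smul_sub]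
      _ = sEval r n x * eulerianIdem r n j - x ^ j • eulerianIdem r n j := by
          congr 1
          · rw [sEval_expand x, Finset.sum_mul]
            apply Finset.sum_congr rfl
            intro i _
            rw [smul_mul_assoc]
          · calc ∑ i ∈ range (n + 1), x ^ i • (if i = j then eulerianIdem r n j else 0)
                = ∑ i ∈ range (n + 1), (if i = j then x ^ i • eulerianIdem r n j else 0) := by
                  apply Finset.sum_congr rfl
                  intro i _
                  split_ifs <;> simp
              _ = x ^ j • eulerianIdem r n j := by
                  rw [Finset.sum_ite_eq' (range (n + 1)) j
                    (fun i => x ^ i • eulerianIdem r n j), if_pos hj]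
      _ = 0 := by rw [key1 p j hj, sub_self]
  intro i hi
  have := vanish (n + 1)
    (fun i => eulerianIdem r n i * eulerianIdem r n j -
      (if i = j then eulerianIdem r n j else 0)) hsum i hi
  exact sub_eq_zero.mp this

end Final

end EulerianAux


/-- The `c_i`, for `0 ≤ i ≤ n`, are pairwise orthogonal idempotents. -/
theorem eulerianIdem_orthogonal_idempotent (r n : ℕ) [NeZero r] (hn : 1 ≤ n) :
    (∀ i ≤ n, ∀ j ≤ n, i ≠ j → eulerianIdem r n i * eulerianIdem r n j = 0) ∧
      (∀ i ≤ n, eulerianIdem r n i * eulerianIdem r n i = eulerianIdem r n i) := by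
  constructor
  · intro i hi j hj hij
    have := EulerianAux.key2 (r := r) (n := n) j (Finset.mem_range.mpr (by omega))
      i (Finset.mem_range.mpr (by omega))
    rwa [if_neg hij] at this
  · intro i hi
    have := EulerianAux.key2 (r := r) (n := n) i (Finset.mem_range.mpr (by omega))
      i (Finset.mem_range.mpr (by omega))
    rwa [if_pos rfl] at this
end

section
/- (Steingrímsson) In the ring of formal power series ℤ⟦t⟧, the identity (Σ_{j≥0} (r·j + 1)^n · t^j) · (1 − t)^{n+1} = Σ_{π ∈ G_{r,n}} t^{des(π)} holds; equivalently, Σ_{j≥0} (rj+1)^n t^j = (Σ_{π ∈ G_{r,n}} t^{des(π)}) / (1−t)^{n+1}. -/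
open scoped BigOperators

open ColoredPerm

namespace Stein
open ColoredPerm Finset
set_option linter.unusedSectionVars false
set_option linter.unusedSectionVars false
variable {r n : ℕ} [NeZero r]

lemma mem_Des_last (a : ColoredPerm r n) (i : Fin n) (h : i.1 + 1 = n) :
    i ∈ Des a ↔ a.col i ≠ 0 := by
  have h2 : ¬ (i.1 + 1 < n) := by omega
  rw [Des, Finset.mem_filter, letterAt, letterAt, dif_neg h2, dif_pos i.isLt]
  simp only [Finset.mem_univ, true_and, letterLT, Fin.eta]
  rw [ne_eq, ← ZMod.val_eq_zero]
  constructor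
  · rintro (h | ⟨h, -⟩) <;> omega
  · intro hv
    rcases Nat.lt_or_ge 1 ((a.col i).val) with h1 | h1
    · exact Or.inl h1
    · exact Or.inr ⟨by omega, by omega⟩

lemma mem_Des_mid (a : ColoredPerm r n) (i : Fin n) (h : i.1 + 1 < n) :
    i ∈ Des a ↔ ((a.col ⟨i.1 + 1, h⟩).val < (a.col i).val ∨
      ((a.col ⟨i.1 + 1, h⟩).val = (a.col i).val ∧ a.perm ⟨i.1 + 1, h⟩ < a.perm i)) := by
  rw [Des, Finset.mem_filter, letterAt, letterAt, dif_pos h, dif_pos i.isLt]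
  simp only [Finset.mem_univ, true_and, letterLT, Fin.eta]
  constructor
  · rintro (h1 | ⟨h1, h2⟩)
    · exact Or.inl h1
    · exact Or.inr ⟨h1, by rw [Fin.lt_def]; omega⟩
  · rintro (h1 | ⟨h1, h2⟩)
    · exact Or.inl h1
    · rw [Fin.lt_def] at h2; exact Or.inr ⟨h1, by omega⟩

lemma gapWeak {v : Fin n → ℕ} (h : ∀ i : Fin n, ∀ hh : i.1 + 1 < n, v ⟨i.1 + 1, hh⟩ ≤ v i) :
    ∀ i j : Fin n, i ≤ j → v j ≤ v i := by
  have key : ∀ k : ℕ, ∀ i j : Fin n, j.1 = i.1 + k → v j ≤ v i := by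
    intro k
    induction k with
    | zero => intro i j hij; have : i = j := Fin.ext (by omega); subst this; rfl
    | succ k ih =>
      intro i j hij
      have h1 : i.1 + 1 < n := by have := j.isLt; omega
      exact le_trans (ih ⟨i.1 + 1, h1⟩ j (by simp; omega)) (h i h1)
  intro i j hij
  exact key (j.1 - i.1) i j (by have := Fin.le_def.mp hij; omega)

lemma gapStrict {v : Fin n → ℕ} (h : ∀ i : Fin n, ∀ hh : i.1 + 1 < n, v ⟨i.1 + 1, hh⟩ < v i) :
    ∀ i j : Fin n, i ≤ j → v j + (j.1 - i.1) ≤ v i := by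
  have key : ∀ k : ℕ, ∀ i j : Fin n, j.1 = i.1 + k → v j + k ≤ v i := by
    intro k
    induction k with
    | zero => intro i j hij; have : i = j := Fin.ext (by omega); subst this; simp
    | succ k ih =>
      intro i j hij
      have h1 : i.1 + 1 < n := by have := j.isLt; omega
      have := ih ⟨i.1 + 1, h1⟩ j (by simp; omega)
      have := h i h1
      omega
  intro i j hij
  have := Fin.le_def.mp hij
  have := key (j.1 - i.1) i j (by omega)
  omega

lemma tieChain {v : Fin n → ℕ} {g : Fin n → Fin n}
    (hw : ∀ i : Fin n, ∀ hh : i.1 + 1 < n, v ⟨i.1 + 1, hh⟩ ≤ v i)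
    (ht : ∀ i : Fin n, ∀ hh : i.1 + 1 < n, v i = v ⟨i.1 + 1, hh⟩ → g i < g ⟨i.1 + 1, hh⟩) :
    ∀ i j : Fin n, i < j → v i = v j → g i < g j := by
  have key : ∀ k : ℕ, ∀ i j : Fin n, j.1 = i.1 + (k + 1) → v i = v j → g i < g j := by
    intro k
    induction k with
    | zero =>
      intro i j hij hv
      have h1 : i.1 + 1 < n := by have := j.isLt; omega
      have : j = ⟨i.1 + 1, h1⟩ := Fin.ext (by simp; omega)
      subst this
      exact ht i h1 hv
    | succ k ih =>
      intro i j hij hv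
      have h1 : i.1 + 1 < n := by have := j.isLt; omega
      have hvi' : v i = v ⟨i.1 + 1, h1⟩ := by
        have h2 := hw i h1
        have h3 := gapWeak hw ⟨i.1 + 1, h1⟩ j (by rw [Fin.le_def]; simp; omega)
        omega
      exact lt_trans (ht i h1 hvi') (ih ⟨i.1 + 1, h1⟩ j (by simp; omega) (by omega))
  intro i j hij hv
  have := Fin.lt_def.mp hij
  exact key (j.1 - i.1 - 1) i j (by omega) hv

lemma rpos : 0 < r := Nat.pos_of_ne_zero (NeZero.ne r)

lemma ceil_mul (v : ℕ) : r * ((v + (r - 1)) / r) = v + (r - v % r) % r := by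
  have hr := rpos (r := r)
  obtain ⟨q, t, ht, hv⟩ : ∃ q t, t < r ∧ v = r * q + t :=
    ⟨v / r, v % r, Nat.mod_lt _ hr, (Nat.div_add_mod v r).symm⟩
  subst hv
  have hmod : (r * q + t) % r = t := by
    rw [Nat.mul_add_mod]; exact Nat.mod_eq_of_lt ht
  rw [hmod]
  rcases Nat.eq_zero_or_pos t with rfl | htpos
  · rw [Nat.sub_zero, Nat.mod_self, Nat.add_zero, Nat.mul_add_div hr,
      Nat.div_eq_of_lt (by omega), Nat.add_zero]
  · have h1 : r * q + t + (r - 1) = r * (q + 1) + (t - 1) := by ring_nf; omega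
    rw [h1, Nat.mul_add_div hr, Nat.div_eq_of_lt (by omega), Nat.mod_eq_of_lt (by omega)]
    ring_nf
    omega

lemma ceil_of_encode {s l : ℕ} (hs : s < r) (hsl : s ≤ r * l) :
    (r * l - s + (r - 1)) / r = l := by
  have hr := rpos (r := r)
  have h1 : r * l - s + (r - 1) = r * l + (r - 1 - s) := by omega
  rw [h1, Nat.mul_add_div hr, Nat.div_eq_of_lt (by omega), Nat.add_zero]

end Stein

namespace Stein
variable {r n : ℕ} [NeZero r]
open ColoredPerm Finset
set_option linter.unusedSectionVars false

/-! ### Compatible sequences -/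

def nxt (lam : Fin n → ℕ) (i : Fin n) : ℕ :=
  if h : i.1 + 1 < n then lam ⟨i.1 + 1, h⟩ else 0

def IsCompat (a : ColoredPerm r n) (j : ℕ) (lam : Fin n → ℕ) : Prop :=
  (∀ i, lam i ≤ j) ∧ ∀ i : Fin n, nxt lam i ≤ lam i ∧ (i ∈ Des a → nxt lam i < lam i)

instance (a : ColoredPerm r n) (j : ℕ) : DecidablePred (IsCompat a j) := fun lam => by
  unfold IsCompat; infer_instance

def Compat (a : ColoredPerm r n) (j : ℕ) : Finset (Fin n → ℕ) :=
  (Fintype.piFinset fun _ => Finset.range (j + 1)).filter (IsCompat a j)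

lemma mem_Compat {a : ColoredPerm r n} {j : ℕ} {lam : Fin n → ℕ} :
    lam ∈ Compat a j ↔ IsCompat a j lam := by
  constructor
  · exact fun h => (Finset.mem_filter.mp h).2
  · intro h
    refine Finset.mem_filter.mpr ⟨Fintype.mem_piFinset.mpr fun i => ?_, h⟩
    exact Finset.mem_range.mpr (Nat.lt_succ_of_le (h.1 i))

lemma compat_pos {a : ColoredPerm r n} {j : ℕ} {lam : Fin n → ℕ}
    (h : IsCompat a j lam) : ∀ i : Fin n, a.col i ≠ 0 → 1 ≤ lam i := by
  have key : ∀ k : ℕ, ∀ i : Fin n, n - i.1 ≤ k → a.col i ≠ 0 → 1 ≤ lam i := by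
    intro k
    induction k with
    | zero => intro i hi; have := i.isLt; omega
    | succ k ih =>
      intro i hi hcol
      rcases Nat.lt_or_ge (i.1 + 1) n with hlt | hge
      · -- internal position
        rcases Nat.lt_or_ge ((a.col ⟨i.1 + 1, hlt⟩).val) ((a.col i).val) with hc | hc
        · -- descent at i
          have hdes : i ∈ Des a := (mem_Des_mid a i hlt).mpr (Or.inl hc)
          have := (h.2 i).2 hdes
          omega
        · -- color at i+1 is also nonzero
          have hcol' : a.col ⟨i.1 + 1, hlt⟩ ≠ 0 := by
            intro h0
            rw [ne_eq, ← ZMod.val_eq_zero] at hcol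
            rw [← ZMod.val_eq_zero] at h0
            omega
          have h1 := ih ⟨i.1 + 1, hlt⟩ (by simp; omega) hcol'
          have h2 := (h.2 i).1
          rw [nxt, dif_pos hlt] at h2
          omega
      · -- last position
        have hdes : i ∈ Des a := (mem_Des_last a i (by have := i.isLt; omega)).mpr hcol
        have := (h.2 i).2 hdes
        rw [nxt, dif_neg (by omega)] at this
        omega
  exact fun i => key (n - i.1) i le_rfl

lemma col_le {a : ColoredPerm r n} {j : ℕ} {lam : Fin n → ℕ}
    (h : IsCompat a j lam) (i : Fin n) : (a.col i).val ≤ r * lam i := by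
  rcases eq_or_ne (a.col i) 0 with h0 | h0
  · simp [h0]
  · calc (a.col i).val ≤ r - 1 := by have := ZMod.val_lt (a.col i); omega
    _ ≤ r * 1 := by have := rpos (r := r); omega
    _ ≤ r * lam i := Nat.mul_le_mul_left r (compat_pos h i h0)

/-! ### The word attached to a compatible pair, and the inverse construction -/

/-- The value (in `[0, rj]`) placed at rank `i` of the sorted order. -/
def rankVal (a : ColoredPerm r n) (lam : Fin n → ℕ) (i : Fin n) : ℕ :=
  r * lam i - (a.col i).val

def toWord (a : ColoredPerm r n) (lam : Fin n → ℕ) : Fin n → ℕ :=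
  fun p => rankVal a lam (a.perm.symm p)

def sortKey (r j : ℕ) (f : Fin n → ℕ) : Fin n → ℕ := fun p => r * j - f p

def sortPerm (r j : ℕ) (f : Fin n → ℕ) : Equiv.Perm (Fin n) := Tuple.sort (sortKey r j f)

def bwCol (r : ℕ) {n : ℕ} (j : ℕ) (f : Fin n → ℕ) : Fin n → ZMod r :=
  fun i => -((f (sortPerm r j f i) : ZMod r))

def bwPerm (r : ℕ) {n : ℕ} (j : ℕ) (f : Fin n → ℕ) : ColoredPerm r n :=
  ⟨sortPerm r j f, bwCol r j f⟩

def bwLam (r : ℕ) {n : ℕ} (j : ℕ) (f : Fin n → ℕ) : Fin n → ℕ :=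
  fun i => (f (sortPerm r j f i) + (r - 1)) / r

lemma rankVal_add (a : ColoredPerm r n) {j : ℕ} {lam : Fin n → ℕ} (h : IsCompat a j lam)
    (i : Fin n) : rankVal a lam i + (a.col i).val = r * lam i :=
  Nat.sub_add_cancel (col_le h i)

/-- Step inequality : the values are weakly decreasing along ranks. -/
lemma rankVal_step_le (a : ColoredPerm r n) {j : ℕ} {lam : Fin n → ℕ} (h : IsCompat a j lam)
    (i : Fin n) (hh : i.1 + 1 < n) : rankVal a lam ⟨i.1 + 1, hh⟩ ≤ rankVal a lam i := by
  have hA := rankVal_add a h i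
  have hB := rankVal_add a h ⟨i.1 + 1, hh⟩
  have hsA := ZMod.val_lt (a.col i)
  have hsB := ZMod.val_lt (a.col ⟨i.1 + 1, hh⟩)
  have hw : lam ⟨i.1 + 1, hh⟩ ≤ lam i := by
    have := (h.2 i).1; rw [nxt, dif_pos hh] at this; exact this
  have hwr : r * lam ⟨i.1 + 1, hh⟩ ≤ r * lam i := Nat.mul_le_mul_left r hw
  rcases Nat.lt_or_ge ((a.col ⟨i.1 + 1, hh⟩).val) ((a.col i).val) with hc | hc
  · -- descent by color: strict level drop
    have hdes : i ∈ Des a := (mem_Des_mid a i hh).mpr (Or.inl hc)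
    have hs := (h.2 i).2 hdes
    rw [nxt, dif_pos hh] at hs
    have : r * (lam ⟨i.1 + 1, hh⟩ + 1) ≤ r * lam i := Nat.mul_le_mul_left r (by omega)
    have hr' : r * lam ⟨i.1 + 1, hh⟩ + r = r * (lam ⟨i.1 + 1, hh⟩ + 1) := by ring
    omega
  · omega

lemma rankVal_step_eq (a : ColoredPerm r n) {j : ℕ} {lam : Fin n → ℕ} (h : IsCompat a j lam)
    (i : Fin n) (hh : i.1 + 1 < n) (he : rankVal a lam i = rankVal a lam ⟨i.1 + 1, hh⟩) :
    a.perm i < a.perm ⟨i.1 + 1, hh⟩ := by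
  have hA := rankVal_add a h i
  have hB := rankVal_add a h ⟨i.1 + 1, hh⟩
  have hsA := ZMod.val_lt (a.col i)
  have hsB := ZMod.val_lt (a.col ⟨i.1 + 1, hh⟩)
  have hw : lam ⟨i.1 + 1, hh⟩ ≤ lam i := by
    have := (h.2 i).1; rw [nxt, dif_pos hh] at this; exact this
  have hwr : r * lam ⟨i.1 + 1, hh⟩ ≤ r * lam i := Nat.mul_le_mul_left r hw
  -- first: colors must be equal
  have hc : (a.col ⟨i.1 + 1, hh⟩).val = (a.col i).val := by
    rcases Nat.lt_or_ge ((a.col ⟨i.1 + 1, hh⟩).val) ((a.col i).val) with hc | hc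
    · exfalso
      have hdes : i ∈ Des a := (mem_Des_mid a i hh).mpr (Or.inl hc)
      have hs := (h.2 i).2 hdes
      rw [nxt, dif_pos hh] at hs
      have : r * (lam ⟨i.1 + 1, hh⟩ + 1) ≤ r * lam i := Nat.mul_le_mul_left r (by omega)
      have hr' : r * lam ⟨i.1 + 1, hh⟩ + r = r * (lam ⟨i.1 + 1, hh⟩ + 1) := by ring
      omega
    · omega
  -- levels equal, hence no descent at i
  have hlam : lam ⟨i.1 + 1, hh⟩ = lam i := by
    have : r * lam ⟨i.1 + 1, hh⟩ = r * lam i := by omega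
    exact Nat.eq_of_mul_eq_mul_left rpos this
  have hnd : i ∉ Des a := by
    intro hdes
    have hs := (h.2 i).2 hdes
    rw [nxt, dif_pos hh] at hs
    omega
  rw [mem_Des_mid a i hh] at hnd
  push_neg at hnd
  have := hnd.2 hc
  rcases lt_or_ge (a.perm i) (a.perm ⟨i.1 + 1, hh⟩) with h1 | h1
  · exact h1
  · exfalso
    rcases lt_or_eq_of_le h1 with h2 | h2
    · exact absurd h2 (not_lt_of_ge this)
    · have h3 : i = (⟨i.1 + 1, hh⟩ : Fin n) := a.perm.injective h2.symm
      have := congrArg Fin.val h3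
      simp at this

end Stein

namespace Stein
variable {r n : ℕ} [NeZero r]
open ColoredPerm Finset
set_option linter.unusedSectionVars false

lemma rankVal_le (a : ColoredPerm r n) {j : ℕ} {lam : Fin n → ℕ} (h : IsCompat a j lam)
    (i : Fin n) : rankVal a lam i ≤ r * j := by
  calc rankVal a lam i ≤ r * lam i := Nat.sub_le _ _
  _ ≤ r * j := Nat.mul_le_mul_left r (h.1 i)

lemma sortPerm_toWord (a : ColoredPerm r n) {j : ℕ} {lam : Fin n → ℕ}
    (h : IsCompat a j lam) : sortPerm r j (toWord a lam) = a.perm := by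
  have hkey : ∀ i : Fin n, sortKey r j (toWord a lam) (a.perm i) = r * j - rankVal a lam i := by
    intro i
    simp only [sortKey, toWord, Equiv.symm_apply_apply]
  symm
  rw [sortPerm, Tuple.eq_sort_iff]
  constructor
  · intro x y hxy
    simp only [Function.comp_apply, hkey]
    exact Nat.sub_le_sub_left (gapWeak (fun i hh => rankVal_step_le a h i hh) x y hxy) _
  · intro x y hxy hkxy
    simp only [hkey] at hkxy
    have hvx := rankVal_le a h x
    have hvy := rankVal_le a h y
    have hv : rankVal a lam x = rankVal a lam y := by omega
    exact tieChain (fun i hh => rankVal_step_le a h i hh)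
      (fun i hh he => rankVal_step_eq a h i hh he) x y hxy hv

lemma bwCol_toWord (a : ColoredPerm r n) {j : ℕ} {lam : Fin n → ℕ}
    (h : IsCompat a j lam) : bwCol r j (toWord a lam) = a.col := by
  funext i
  rw [bwCol, sortPerm_toWord a h]
  have h1 : toWord a lam (a.perm i) = rankVal a lam i := by
    simp only [toWord, Equiv.symm_apply_apply]
  rw [h1]
  have h2 : ((rankVal a lam i + (a.col i).val : ℕ) : ZMod r) = ((r * lam i : ℕ) : ZMod r) := by
    rw [rankVal_add a h i]
  push_cast at h2
  rw [ZMod.natCast_self, zero_mul] at h2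
  have h3 : ((a.col i).val : ZMod r) = a.col i := ZMod.natCast_rightInverse (a.col i)
  rw [h3] at h2
  have := neg_eq_of_add_eq_zero_left h2
  rw [← this, neg_neg]

lemma bwLam_toWord (a : ColoredPerm r n) {j : ℕ} {lam : Fin n → ℕ}
    (h : IsCompat a j lam) : bwLam r j (toWord a lam) = lam := by
  funext i
  rw [bwLam, sortPerm_toWord a h]
  have h1 : toWord a lam (a.perm i) = rankVal a lam i := by
    simp only [toWord, Equiv.symm_apply_apply]
  rw [h1, rankVal]
  exact ceil_of_encode (ZMod.val_lt _) (col_le h i)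

/-! ### Properties of the backward construction -/

section Backward

variable (j : ℕ) (f : Fin n → ℕ)

lemma sort_eq : Tuple.sort (sortKey r j f) = sortPerm r j f := rfl

lemma bw_mul_eq (i : Fin n) :
    r * bwLam r j f i = f (sortPerm r j f i) + (bwCol r j f i).val := by
  have h1 : (bwCol r j f i).val = (r - f (sortPerm r j f i) % r) % r := by
    rw [bwCol, ZMod.neg_val', ZMod.val_natCast]
  rw [h1, bwLam, ceil_mul]

lemma bw_anti (hf : ∀ p, f p ≤ r * j) : ∀ x y : Fin n, x ≤ y →
    f (sortPerm r j f y) ≤ f (sortPerm r j f x) := by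
  intro x y hxy
  have h1 := Tuple.monotone_sort (sortKey r j f) hxy
  simp only [Function.comp_apply, sortKey, sort_eq] at h1
  have h2 := hf (sortPerm r j f x)
  have h3 := hf (sortPerm r j f y)
  omega

lemma bw_tie : ∀ x y : Fin n, x < y →
    f (sortPerm r j f x) = f (sortPerm r j f y) → sortPerm r j f x < sortPerm r j f y := by
  intro x y hxy hv
  have h1 := (Tuple.eq_sort_iff.mp (rfl : sortPerm r j f = Tuple.sort (sortKey r j f))).2
  exact h1 x y hxy (by simp only [Function.comp_apply, sortKey, sort_eq]; omega)

lemma bw_compat (hf : ∀ p, f p ≤ r * j) : IsCompat (bwPerm r j f) j (bwLam r j f) := by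
  have hmul := bw_mul_eq (r := r) j f
  have hvlt : ∀ i, (bwCol r j f i).val < r := fun i => ZMod.val_lt _
  constructor
  · intro i
    have h1 := hmul i
    have h2 := hf (sortPerm r j f i)
    have h3 : r * bwLam r j f i < r * (j + 1) := by
      have := hvlt i
      have : r * (j + 1) = r * j + r := by ring
      omega
    exact Nat.lt_succ_iff.mp (Nat.lt_of_mul_lt_mul_left h3)
  · intro i
    rcases Nat.lt_or_ge (i.1 + 1) n with hh | hh
    · -- internal position
      have hwle : f (sortPerm r j f ⟨i.1 + 1, hh⟩) ≤ f (sortPerm r j f i) :=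
        bw_anti j f hf i ⟨i.1 + 1, hh⟩ (by rw [Fin.le_def]; simp)
      constructor
      · rw [nxt, dif_pos hh, bwLam, bwLam]
        exact Nat.div_le_div_right (Nat.add_le_add_right hwle _)
      · intro hdes
        rw [nxt, dif_pos hh]
        rw [mem_Des_mid _ i hh] at hdes
        simp only [show (bwPerm r j f).col = bwCol r j f from rfl,
          show (bwPerm r j f).perm = sortPerm r j f from rfl] at hdes
        have h1 := hmul i
        have h2 := hmul ⟨i.1 + 1, hh⟩
        have hlt : r * bwLam r j f ⟨i.1 + 1, hh⟩ < r * bwLam r j f i := by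
          rcases hdes with hc | ⟨hc, hp⟩
          · -- color strictly smaller at i+1 : note bwPerm.col = bwCol
            omega
          · -- equal colors, position decrease: values cannot tie
            have hne : f (sortPerm r j f i) ≠ f (sortPerm r j f ⟨i.1 + 1, hh⟩) := by
              intro he
              have := bw_tie j f i ⟨i.1 + 1, hh⟩ (by rw [Fin.lt_def]; simp) he
              exact absurd hp (not_lt_of_gt this)
            omega
        exact Nat.lt_of_mul_lt_mul_left hlt
    · -- last position
      rw [nxt, dif_neg (by omega)]
      refine ⟨Nat.zero_le _, fun hdes => ?_⟩
      rw [mem_Des_last _ i (by have := i.isLt; omega)] at hdes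
      have h1 := hmul i
      have h2 : (bwCol r j f i).val ≠ 0 := by
        intro h0
        exact hdes (by rwa [← ZMod.val_eq_zero])
      have : 0 < r * bwLam r j f i := by omega
      rcases Nat.eq_zero_or_pos (bwLam r j f i) with h3 | h3
      · rw [h3, Nat.mul_zero] at this; omega
      · omega

lemma toWord_bw : toWord (bwPerm r j f) (bwLam r j f) = f := by
  funext p
  have h1 : (bwPerm r j f).perm = sortPerm r j f := rfl
  rw [toWord, rankVal, h1]
  have h2 := bw_mul_eq (r := r) j f ((sortPerm r j f).symm p)
  have h3 : (bwPerm r j f).col = bwCol r j f := rfl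
  rw [h3]
  rw [Equiv.apply_symm_apply] at h2
  omega

end Backward

/-! ### The first counting identity -/

lemma sum_compat_card (j : ℕ) :
    ∑ a : ColoredPerm r n, (Compat a j).card = (r * j + 1) ^ n := by
  classical
  rw [← Finset.card_sigma]
  have h2 : (Fintype.piFinset fun _ : Fin n => Finset.range (r * j + 1)).card
      = (r * j + 1) ^ n := by
    rw [Fintype.card_piFinset]
    simp
  rw [← h2]
  refine Finset.card_bij' (fun x _ => toWord x.1 x.2)
    (fun f _ => ⟨bwPerm r j f, bwLam r j f⟩) ?_ ?_ ?_ ?_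
  · rintro ⟨a, lam⟩ hx
    have h := mem_Compat.mp (Finset.mem_sigma.mp hx).2
    refine Fintype.mem_piFinset.mpr fun p => Finset.mem_range.mpr ?_
    have := rankVal_le a h (a.perm.symm p)
    simp only [toWord]
    exact Nat.lt_succ_of_le this
  · intro f hf
    have hf' : ∀ p, f p ≤ r * j := fun p => by
      have := Finset.mem_range.mp (Fintype.mem_piFinset.mp hf p); omega
    exact Finset.mem_sigma.mpr ⟨Finset.mem_univ _, mem_Compat.mpr (bw_compat j f hf')⟩
  · rintro ⟨a, lam⟩ hx
    have h := mem_Compat.mp (Finset.mem_sigma.mp hx).2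
    have h1 : bwPerm r j (toWord a lam) = a :=
      ColoredPerm.ext (sortPerm_toWord a h) (bwCol_toWord a h)
    have h2 : bwLam r j (toWord a lam) = lam := bwLam_toWord a h
    exact Sigma.ext h1 (heq_of_eq h2)
  · intro f hf
    exact toWord_bw j f

end Stein

namespace Stein
variable {r n : ℕ} [NeZero r]
open ColoredPerm Finset
set_option linter.unusedSectionVars false

/-! ### Counting compatible sequences -/

lemma des_le (a : ColoredPerm r n) : des a ≤ n := by
  classical
  calc des a ≤ (Finset.univ : Finset (Fin n)).card := Finset.card_filter_le _ _
  _ = n := by simp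

/-- Number of non-descent positions at or after `i` (the sentinel position counts). -/
def aCnt (a : ColoredPerm r n) (i : Fin n) : ℕ :=
  (Finset.univ.filter fun k : Fin n => i ≤ k ∧ k ∉ Des a).card

lemma aCnt_step (a : ColoredPerm r n) (i : Fin n) (hh : i.1 + 1 < n) :
    aCnt a i = aCnt a ⟨i.1 + 1, hh⟩ + (if i ∈ Des a then 0 else 1) := by
  by_cases hdes : i ∈ Des a
  · rw [if_pos hdes, Nat.add_zero, aCnt, aCnt]
    congr 1
    apply Finset.filter_congr
    intro k _
    simp only [Fin.le_def]
    constructor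
    · rintro ⟨h1, h2⟩
      refine ⟨?_, h2⟩
      rcases Nat.eq_or_lt_of_le h1 with h3 | h3
      · exact absurd hdes (by rwa [show i = k from Fin.ext h3])
      · omega
    · rintro ⟨h1, h2⟩; exact ⟨by omega, h2⟩
  · rw [if_neg hdes, aCnt, aCnt]
    have hins : (Finset.univ.filter fun k : Fin n => i ≤ k ∧ k ∉ Des a) =
        insert i (Finset.univ.filter fun k : Fin n => (⟨i.1 + 1, hh⟩ : Fin n) ≤ k ∧ k ∉ Des a) := by
      ext k
      simp only [Finset.mem_filter, Finset.mem_univ, true_and, Finset.mem_insert, Fin.le_def]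
      constructor
      · rintro ⟨h1, h2⟩
        rcases Nat.eq_or_lt_of_le h1 with h3 | h3
        · exact Or.inl (Fin.ext h3.symm)
        · exact Or.inr ⟨by omega, h2⟩
      · rintro (rfl | ⟨h1, h2⟩)
        · exact ⟨le_rfl, hdes⟩
        · exact ⟨by omega, h2⟩
    rw [hins, Finset.card_insert_of_notMem (by
      simp only [Finset.mem_filter, Finset.mem_univ, true_and, Fin.le_def]
      intro h1
      omega)]

lemma aCnt_last (a : ColoredPerm r n) (i : Fin n) (hh : i.1 + 1 = n) :
    aCnt a i = if i ∈ Des a then 0 else 1 := by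
  have hset : (Finset.univ.filter fun k : Fin n => i ≤ k ∧ k ∉ Des a) =
      if i ∈ Des a then ∅ else {i} := by
    by_cases hdes : i ∈ Des a
    · rw [if_pos hdes]
      ext k
      simp only [Finset.mem_filter, Finset.mem_univ, true_and, Finset.notMem_empty,
        iff_false, not_and, Fin.le_def]
      intro h1
      have : k = i := Fin.ext (by have := k.isLt; omega)
      rw [this]
      simpa using hdes
    · rw [if_neg hdes]
      ext k
      simp only [Finset.mem_filter, Finset.mem_univ, true_and, Finset.mem_singleton, Fin.le_def]
      constructor
      · rintro ⟨h1, h2⟩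
        exact Fin.ext (by have := k.isLt; omega)
      · rintro rfl
        exact ⟨le_rfl, hdes⟩
  rw [aCnt, hset]
  by_cases hdes : i ∈ Des a <;> simp [hdes]

lemma aCnt_zero (a : ColoredPerm r n) (hn : 0 < n) :
    aCnt a ⟨0, hn⟩ + des a = n := by
  have h1 : (Finset.univ.filter fun k : Fin n => (⟨0, hn⟩ : Fin n) ≤ k ∧ k ∉ Des a) =
      (Des a)ᶜ := by
    ext k
    simp [Fin.le_def, Finset.mem_compl]
  rw [aCnt, h1, Finset.card_compl, Fintype.card_fin]
  have h2 := des_le a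
  have h3 : des a = (Des a).card := rfl
  omega

lemma aCnt_split (a : ColoredPerm r n) (i : Fin n) :
    aCnt a i + (Finset.univ.filter fun k : Fin n => i ≤ k ∧ k ∈ Des a).card + i.1 = n := by
  have h1 : ((Finset.univ.filter fun k : Fin n => i ≤ k).filter fun k => k ∉ Des a).card
      + ((Finset.univ.filter fun k : Fin n => i ≤ k).filter fun k => ¬ (k ∉ Des a)).card
      = (Finset.univ.filter fun k : Fin n => i ≤ k).card :=
    Finset.card_filter_add_card_filter_not _
  rw [Finset.filter_filter, Finset.filter_filter] at h1
  have h2 : (Finset.univ.filter fun k : Fin n => i ≤ k) = Finset.Ici i := by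
    ext k; simp
  have h3 : (Finset.Ici i).card = n - i.1 := Fin.card_Ici i
  have h4 : ((Finset.univ.filter fun k : Fin n => i ≤ k ∧ ¬ k ∉ Des a)).card
      = ((Finset.univ.filter fun k : Fin n => i ≤ k ∧ k ∈ Des a)).card := by
    congr 1
    apply Finset.filter_congr
    intro k _
    simp
  rw [h2, h3, h4] at h1
  rw [aCnt]
  have := i.isLt
  omega

lemma dAfter_le (a : ColoredPerm r n) (i : Fin n) :
    (Finset.univ.filter fun k : Fin n => i ≤ k ∧ k ∈ Des a).card ≤ des a := by
  apply Finset.card_le_card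
  intro k hk
  exact (Finset.mem_filter.mp hk).2.2


/-- Step inequality for the shifted sequence `ν i = λ i + a i`. -/
lemma nu_step (a : ColoredPerm r n) {j : ℕ} {lam : Fin n → ℕ} (h : IsCompat a j lam)
    (i : Fin n) (hh : i.1 + 1 < n) :
    lam ⟨i.1 + 1, hh⟩ + aCnt a ⟨i.1 + 1, hh⟩ < lam i + aCnt a i := by
  have h1 := aCnt_step a i hh
  have h2 := (h.2 i).1
  have h3 := (h.2 i).2
  rw [nxt, dif_pos hh] at h2 h3
  by_cases hdes : i ∈ Des a
  · have := h3 hdes; rw [if_pos hdes] at h1; omega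
  · rw [if_neg hdes] at h1; omega

/-- Lower bound for sorted elements composed with reversal. -/
lemma emb_ge (a : ColoredPerm r n) (hn : 0 < n) {s : Finset ℕ} (hs2 : s.card = n)
    (hone : ∀ x : Fin n, 1 ≤ s.orderEmbOfFin hs2 x) (i : Fin n) :
    n - i.1 ≤ s.orderEmbOfFin hs2 (Fin.rev i) := by
  have hstep : ∀ k : Fin n, ∀ hh : k.1 + 1 < n,
      (fun m : Fin n => s.orderEmbOfFin hs2 (Fin.rev m)) ⟨k.1 + 1, hh⟩
        < (fun m : Fin n => s.orderEmbOfFin hs2 (Fin.rev m)) k := by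
    intro k hh
    apply (s.orderEmbOfFin hs2).strictMono
    rw [Fin.rev_lt_rev, Fin.lt_def]
    simp
  have hgap := gapStrict (v := fun m : Fin n => s.orderEmbOfFin hs2 (Fin.rev m)) hstep
  have hlt := i.isLt
  have h1 := hgap i ⟨n - 1, by omega⟩ (by rw [Fin.le_def]; simp; omega)
  have h2 := hone (Fin.rev ⟨n - 1, by omega⟩)
  simp only at h1
  omega

lemma emb_ge_aCnt (a : ColoredPerm r n) (hn : 0 < n) {s : Finset ℕ} (hs2 : s.card = n)
    (hone : ∀ x : Fin n, 1 ≤ s.orderEmbOfFin hs2 x) (i : Fin n) :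
    aCnt a i ≤ s.orderEmbOfFin hs2 (Fin.rev i) := by
  have h1 := emb_ge a hn hs2 hone i
  have h2 := aCnt_split a i
  omega


lemma bw2_compat (a : ColoredPerm r n) (j : ℕ) (hn : 0 < n) {s : Finset ℕ}
    (hs1 : s ⊆ Finset.Icc 1 (n + j - des a)) (hs2 : s.card = n) :
    IsCompat a j (fun i => s.orderEmbOfFin hs2 (Fin.rev i) - aCnt a i) := by
  have hdn : des a ≤ n := des_le a
  have hone : ∀ x : Fin n, 1 ≤ s.orderEmbOfFin hs2 x := fun x =>
    (Finset.mem_Icc.mp (hs1 (Finset.orderEmbOfFin_mem s hs2 x))).1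
  have hhighM : ∀ x : Fin n, s.orderEmbOfFin hs2 x ≤ n + j - des a := fun x =>
    (Finset.mem_Icc.mp (hs1 (Finset.orderEmbOfFin_mem s hs2 x))).2
  have hstep : ∀ k : Fin n, ∀ hh : k.1 + 1 < n,
      (fun m : Fin n => s.orderEmbOfFin hs2 (Fin.rev m)) ⟨k.1 + 1, hh⟩
        < (fun m : Fin n => s.orderEmbOfFin hs2 (Fin.rev m)) k := by
    intro k hh
    apply (s.orderEmbOfFin hs2).strictMono
    rw [Fin.rev_lt_rev, Fin.lt_def]
    simp
  have hgap := gapStrict (v := fun m : Fin n => s.orderEmbOfFin hs2 (Fin.rev m)) hstep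
  have hlow := emb_ge a hn hs2 hone
  have haC : ∀ i : Fin n, aCnt a i ≤ n - i.1 := by
    intro i
    have := aCnt_split a i
    omega
  constructor
  · intro i
    have h0 : s.orderEmbOfFin hs2 (Fin.rev i) + i.1 ≤ s.orderEmbOfFin hs2 (Fin.rev ⟨0, hn⟩) := by
      simpa using hgap ⟨0, hn⟩ i (by rw [Fin.le_def]; simp)
    have h1 := hhighM (Fin.rev ⟨0, hn⟩)
    have h2 := aCnt_split a i
    have h3 := dAfter_le a i
    have := i.isLt
    simp only
    omega
  · intro i
    rcases Nat.lt_or_ge (i.1 + 1) n with hh | hh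
    · rw [nxt, dif_pos hh]
      have h1 := aCnt_step a i hh
      have h2 : s.orderEmbOfFin hs2 (Fin.rev ⟨i.1 + 1, hh⟩)
          < s.orderEmbOfFin hs2 (Fin.rev i) := hstep i hh
      have h3 : n - i.1 ≤ s.orderEmbOfFin hs2 (Fin.rev i) := hlow i
      have h4 : n - (i.1 + 1) ≤ s.orderEmbOfFin hs2 (Fin.rev ⟨i.1 + 1, hh⟩) := by
        simpa using hlow ⟨i.1 + 1, hh⟩
      have h5 := haC i
      have h6 : aCnt a ⟨i.1 + 1, hh⟩ ≤ n - (i.1 + 1) := by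
        simpa using haC ⟨i.1 + 1, hh⟩
      have := i.isLt
      simp only
      constructor
      · by_cases hdes : i ∈ Des a
        · rw [if_pos hdes] at h1; omega
        · rw [if_neg hdes] at h1; omega
      · intro hdes
        rw [if_pos hdes] at h1
        omega
    · rw [nxt, dif_neg (by omega)]
      refine ⟨Nat.zero_le _, fun hdes => ?_⟩
      have h1 := aCnt_last a i (by have := i.isLt; omega)
      rw [if_pos hdes] at h1
      have h2 := hone (Fin.rev i)
      simp only
      omega

set_option maxHeartbeats 1000000 in
/-- The key cardinality computation for compatible sequences. -/
lemma compat_card (a : ColoredPerm r n) (j : ℕ) (hn : 0 < n) :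
    (Compat a j).card = (n + j - des a).choose n := by
  classical
  have hdn : des a ≤ n := des_le a
  set M := n + j - des a with hM
  have hMd : M + des a = n + j := by omega
  have hcard : ((Finset.Icc 1 M).powersetCard n).card = M.choose n := by
    rw [Finset.card_powersetCard, Nat.card_Icc, Nat.add_sub_cancel]
  rw [← hcard]
  refine Finset.card_bij'
    (fun lam _ => Finset.image (fun i => lam i + aCnt a i) Finset.univ)
    (fun s hs => fun i =>
      s.orderEmbOfFin (Finset.mem_powersetCard.mp hs).2 (Fin.rev i) - aCnt a i)
    ?_ ?_ ?_ ?_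
  · -- forward maps to powersetCard
    rintro lam hlam
    have h := mem_Compat.mp hlam
    have hgap := gapStrict (v := fun i : Fin n => lam i + aCnt a i) (fun i hh => nu_step a h i hh)
    have hlast1 : 1 ≤ lam ⟨n - 1, by omega⟩ + aCnt a ⟨n - 1, by omega⟩ := by
      have h1 := aCnt_last a ⟨n - 1, by omega⟩ (by simp; omega)
      by_cases hdes : (⟨n - 1, by omega⟩ : Fin n) ∈ Des a
      · have h2 := (h.2 ⟨n - 1, by omega⟩).2 hdes
        rw [nxt, dif_neg (by simp; omega)] at h2
        omega
      · rw [if_neg hdes] at h1; omega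
    have hlow : ∀ i : Fin n, 1 ≤ lam i + aCnt a i := by
      intro i
      have := hgap i ⟨n - 1, by omega⟩ (by rw [Fin.le_def]; simp; have := i.isLt; omega)
      omega
    have hhigh : ∀ i : Fin n, lam i + aCnt a i ≤ M := by
      intro i
      have h0 := hgap ⟨0, hn⟩ i (by rw [Fin.le_def]; simp)
      have h1 := aCnt_zero a hn
      have h2 := h.1 ⟨0, hn⟩
      omega
    have hinj : Function.Injective (fun i : Fin n => lam i + aCnt a i) := by
      intro x y hxy
      simp only at hxy
      by_contra hne
      rcases lt_trichotomy x y with h1 | h1 | h1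
      · have := hgap x y h1.le; have := Fin.lt_def.mp h1; omega
      · exact hne h1
      · have := hgap y x h1.le; have := Fin.lt_def.mp h1; omega
    refine Finset.mem_powersetCard.mpr ⟨?_, ?_⟩
    · intro x hx
      obtain ⟨i, -, rfl⟩ := Finset.mem_image.mp hx
      exact Finset.mem_Icc.mpr ⟨hlow i, hhigh i⟩
    · rw [Finset.card_image_of_injective _ hinj, Finset.card_univ, Fintype.card_fin]
  · -- backward maps to Compat
    rintro s hs
    exact mem_Compat.mpr (bw2_compat a j hn (Finset.mem_powersetCard.mp hs).1
      (Finset.mem_powersetCard.mp hs).2)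
  · -- left inverse
    rintro lam hlam
    have h := mem_Compat.mp hlam
    funext i
    have hgap := gapStrict (v := fun i : Fin n => lam i + aCnt a i) (fun k hh => nu_step a h k hh)
    have hanti : ∀ x y : Fin n, x < y → lam y + aCnt a y < lam x + aCnt a x := by
      intro x y hxy
      have := hgap x y hxy.le
      have := Fin.lt_def.mp hxy
      omega
    have hmono : StrictMono (fun x : Fin n => lam (Fin.rev x) + aCnt a (Fin.rev x)) := by
      intro x y hxy
      exact hanti _ _ (Fin.rev_lt_rev.mpr hxy)
    have hsmem : ∀ x : Fin n,
        lam (Fin.rev x) + aCnt a (Fin.rev x)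
          ∈ Finset.image (fun i => lam i + aCnt a i) Finset.univ :=
      fun x => Finset.mem_image_of_mem _ (Finset.mem_univ _)
    have key : ∀ (P : (Finset.image (fun i => lam i + aCnt a i) Finset.univ).card = n),
        (Finset.image (fun i => lam i + aCnt a i) Finset.univ).orderEmbOfFin P (Fin.rev i)
          - aCnt a i = lam i := by
      intro P
      have hequ := Finset.orderEmbOfFin_unique P hsmem hmono
      have h2 : (Finset.image (fun i => lam i + aCnt a i) Finset.univ).orderEmbOfFin P
          (Fin.rev i) = lam (Fin.rev (Fin.rev i)) + aCnt a (Fin.rev (Fin.rev i)) := by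
        rw [← hequ]
      rw [Fin.rev_rev] at h2
      omega
    exact key _
  · -- right inverse
    rintro s hs
    obtain ⟨hs1, hs2⟩ := Finset.mem_powersetCard.mp hs
    have hone : ∀ x : Fin n, 1 ≤ s.orderEmbOfFin hs2 x := fun x =>
      (Finset.mem_Icc.mp (hs1 (Finset.orderEmbOfFin_mem s hs2 x))).1
    have hge := emb_ge_aCnt a hn hs2 hone
    have hfun : (fun i : Fin n =>
        s.orderEmbOfFin hs2 (Fin.rev i) - aCnt a i + aCnt a i)
        = fun i => s.orderEmbOfFin hs2 (Fin.rev i) :=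
      funext fun i => Nat.sub_add_cancel (hge i)
    show Finset.image (fun i : Fin n =>
        s.orderEmbOfFin hs2 (Fin.rev i) - aCnt a i + aCnt a i) Finset.univ = s
    rw [hfun]
    have hinj : Function.Injective (fun i : Fin n => s.orderEmbOfFin hs2 (Fin.rev i)) :=
      fun x y hxy => Fin.rev_injective ((s.orderEmbOfFin hs2).injective hxy)
    apply Finset.eq_of_subset_of_card_le
    · intro x hx
      obtain ⟨i, -, rfl⟩ := Finset.mem_image.mp hx
      exact Finset.orderEmbOfFin_mem s hs2 _
    · rw [Finset.card_image_of_injective _ hinj, Finset.card_univ, Fintype.card_fin, hs2]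

end Stein

namespace Stein
variable {r n : ℕ} [NeZero r]
open ColoredPerm Finset PowerSeries
set_option linter.unusedSectionVars false

/-- The key counting identity. -/
lemma key_count (hn : 0 < n) (j : ℕ) :
    (r * j + 1) ^ n = ∑ a : ColoredPerm r n, (n + j - des a).choose n := by
  rw [← sum_compat_card (r := r) (n := n) j]
  exact Finset.sum_congr rfl fun a _ => compat_card a j hn

/-- Shifting the binomial family multiplies by `X`. -/
lemma shift_ps (hn : 0 < n) (d : ℕ) :
    (PowerSeries.mk fun j => (((n + j - (d + 1)).choose n : ℕ) : ℤ)) =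
      PowerSeries.X * PowerSeries.mk fun j => (((n + j - d).choose n : ℕ) : ℤ) := by
  ext k
  rw [PowerSeries.coeff_mk, mul_comm]
  cases k with
  | zero =>
    rw [PowerSeries.coeff_zero_mul_X]
    have : (n + 0 - (d + 1)).choose n = 0 := Nat.choose_eq_zero_of_lt (by omega)
    rw [this, Nat.cast_zero]
  | succ k =>
    rw [PowerSeries.coeff_succ_mul_X, PowerSeries.coeff_mk]
    congr 2
    omega

lemma psd (hn : 0 < n) (d : ℕ) :
    (PowerSeries.mk fun j => (((n + j - d).choose n : ℕ) : ℤ)) *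
      (1 - PowerSeries.X) ^ (n + 1) = PowerSeries.X ^ d := by
  induction d with
  | zero =>
    simp only [Nat.sub_zero, pow_zero]
    exact PowerSeries.mk_add_choose_mul_one_sub_pow_eq_one ℤ n
  | succ d ih =>
    rw [shift_ps hn d, mul_assoc, ih, pow_succ, mul_comm]

end Stein

/-- Steingrímsson's theorem. -/
theorem steingrimsson_eulerian' (r n : ℕ) [NeZero r] (hn : 1 ≤ n) :
    (PowerSeries.mk fun j : ℕ => (((r * j + 1 : ℕ) : ℤ)) ^ n) *
        (1 - PowerSeries.X) ^ (n + 1) =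
      ∑ π : ColoredPerm r n, (PowerSeries.X : PowerSeries ℤ) ^ ColoredPerm.des π := by
  classical
  have hmk : (PowerSeries.mk fun j : ℕ => (((r * j + 1 : ℕ) : ℤ)) ^ n)
      = ∑ a : ColoredPerm r n,
          PowerSeries.mk fun j => (((n + j - ColoredPerm.des a).choose n : ℕ) : ℤ) := by
    ext k
    rw [map_sum]
    simp only [PowerSeries.coeff_mk]
    have h1 : (((r * k + 1 : ℕ) : ℤ)) ^ n = (((r * k + 1) ^ n : ℕ) : ℤ) := by push_cast; ring
    rw [h1, Stein.key_count hn k, Nat.cast_sum]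
  rw [hmk, Finset.sum_mul]
  exact Finset.sum_congr rfl fun a _ => Stein.psd hn (ColoredPerm.des a)


/-- Steingrímsson's theorem: `(Σ_{j≥0} (rj+1)^n t^j) · (1−t)^{n+1} = Σ_{π ∈ G_{r,n}} t^{des(π)}`
in `ℤ⟦t⟧`. -/
theorem steingrimsson_eulerian (r n : ℕ) [NeZero r] (hn : 1 ≤ n) :
    (PowerSeries.mk fun j : ℕ => (((r * j + 1 : ℕ) : ℤ)) ^ n) *
        (1 - PowerSeries.X) ^ (n + 1) =
      ∑ π : ColoredPerm r n, (PowerSeries.X : PowerSeries ℤ) ^ des π := by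
  exact steingrimsson_eulerian' r n hn
end
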